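/- arXiv:1905.04078 — 2 statements merged into one kernel-verified Lean document; each statement's English description precedes it below -/
import Mathlib

section
/- For A-bounded operators T and S on H, the set W_A(T,S) = {ξ ∈ ℂ : ∃{x_n}, ‖x_n‖_A = 1, lim ‖Tx_n‖_A = ‖T‖_A, lim ⟨Tx_n, Sx_n⟩_A = ξ} is convex. -/
noncomputable section

open Filter Topology

variable {H : Type*} [NormedAddCommGroup H] [InnerProductSpace ℂ H]

/-- The semi-inner product induced by `A`: `⟨x, y⟩_A = ⟨A x, y⟩`. -/
def innerA (A : H →L[ℂ] H) (x y : H) : ℂ := @inner ℂ _ _ (A x) y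

/-- The seminorm induced by `A`: `‖x‖_A = √⟨A x, x⟩`. -/
def normA (A : H →L[ℂ] H) (x : H) : ℝ := Real.sqrt (innerA A x x).re

/-- The operator seminorm induced by `A`. -/
def opNormA (A T : H →L[ℂ] H) : ℝ :=
  sSup {r : ℝ | ∃ x : H, normA A x = 1 ∧ r = normA A (T x)}

/-- `T` is `A`-bounded. -/
def ABounded (A T : H →L[ℂ] H) : Prop :=
  ∃ c > 0, ∀ x : H, normA A (T x) ≤ c * normA A x

/-- The set `W_A(T,S)`. -/
def WA (A T S : H →L[ℂ] H) : Set ℂ :=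
  {ξ : ℂ | ∃ x : ℕ → H, (∀ n, normA A (x n) = 1) ∧
    Tendsto (fun n => normA A (T (x n))) atTop (𝓝 (opNormA A T)) ∧
    Tendsto (fun n => innerA A (T (x n)) (S (x n))) atTop (𝓝 ξ)}

open ComplexConjugate in
lemma innerA_expand (A : H →L[ℂ] H) (p q p' q' : ℂ) (a b a' b' : H) :
    innerA A (p•a + q•b) (p'•a' + q'•b') =
      conj p * p' * innerA A a a' + conj p * q' * innerA A a b'
    + conj q * p' * innerA A b a' + conj q * q' * innerA A b b' := by
  simp [innerA, map_add, map_smul, inner_add_left, inner_add_right,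
    inner_smul_left, inner_smul_right]
  ring

open ComplexConjugate in
lemma innerA_smul (A : H →L[ℂ] H) (p q : ℂ) (a b : H) :
    innerA A (p•a) (q•b) = conj p * q * innerA A a b := by
  simp [innerA, map_smul, inner_smul_left, inner_smul_right]; ring

open ComplexConjugate in
lemma innerA_conj [CompleteSpace H] {A : H →L[ℂ] H} (hA : IsSelfAdjoint A) (x y : H) :
    innerA A y x = conj (innerA A x y) := by
  rw [innerA, innerA, ← inner_conj_symm]
  congr 1
  calc @inner ℂ _ _ x (A y) = @inner ℂ _ _ (ContinuousLinearMap.adjoint A x) y := by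
        rw [ContinuousLinearMap.adjoint_inner_left]
    _ = @inner ℂ _ _ (A x) y := by rw [ContinuousLinearMap.isSelfAdjoint_iff'.mp hA]

lemma innerA_self_im [CompleteSpace H] {A : H →L[ℂ] H} (hA : IsSelfAdjoint A) (x : H) :
    (innerA A x x).im = 0 := by
  have h := innerA_conj hA x x
  have : (starRingEnd ℂ) (innerA A x x) = innerA A x x := h.symm
  simpa [Complex.conj_eq_iff_im] using this

lemma normA_nonneg (A : H →L[ℂ] H) (x : H) : 0 ≤ normA A x := Real.sqrt_nonneg _

lemma innerA_self_re_nonneg [CompleteSpace H] {A : H →L[ℂ] H} (hA : A.IsPositive) (x : H) :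
    0 ≤ (innerA A x x).re := hA.2 x

lemma normA_sq [CompleteSpace H] {A : H →L[ℂ] H} (hA : A.IsPositive) (x : H) :
    normA A x ^ 2 = (innerA A x x).re :=
  Real.sq_sqrt (innerA_self_re_nonneg hA x)

lemma innerA_self_eq_one [CompleteSpace H] {A : H →L[ℂ] H} (hA : A.IsPositive) {x : H}
    (hx : normA A x = 1) : innerA A x x = 1 := by
  have hre : (innerA A x x).re = 1 := by
    have := normA_sq hA x; rw [hx] at this; linarith
  have him := innerA_self_im hA.isSelfAdjoint x
  exact Complex.ext (by simp [hre]) (by simp [him])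

lemma normA_smul (A : H →L[ℂ] H) (c : ℂ) (x : H) :
    normA A (c • x) = ‖c‖ * normA A x := by
  have h : innerA A (c•x) (c•x) = (starRingEnd ℂ) c * c * innerA A x x := by
    simpa using innerA_smul A c c x x
  rw [normA, h]
  have : ((starRingEnd ℂ) c * c * innerA A x x).re = (‖c‖^2) * (innerA A x x).re := by
    rw [Complex.conj_mul', ← Complex.ofReal_pow, Complex.re_ofReal_mul]
  rw [this, Real.sqrt_mul (sq_nonneg _), Real.sqrt_sq (norm_nonneg c)]
  rfl

open ComplexConjugate in

open ComplexConjugate in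
lemma cs_aux (f : H → H → ℂ)
    (h1 : ∀ x x' y, f (x+x') y = f x y + f x' y)
    (h2 : ∀ (c : ℂ) x y, f (c•x) y = conj c * f x y)
    (h3 : ∀ x y, f y x = conj (f x y))
    (h4 : ∀ x, 0 ≤ (f x x).re)
    (x y : H) : ‖f x y‖ ≤ Real.sqrt (f x x).re * Real.sqrt (f y y).re := by
  have h1' : ∀ x y y', f x (y+y') = f x y + f x y' := by
    intro x y y'
    rw [h3, h1, map_add, ← h3, ← h3]
  have h2' : ∀ (c : ℂ) x y, f x (c•y) = c * f x y := by
    intro c x y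
    rw [h3, h2, map_mul, Complex.conj_conj, ← h3]
  by_cases hg : f x y = 0
  · rw [hg]
    simp only [norm_zero]
    positivity
  · set g := f x y with hgdef
    have hgn : (0:ℝ) < ‖g‖ := norm_pos_iff.mpr hg
    have key' : ∀ c : ℂ, 0 ≤ (f x x).re + 2*(c*g).re + ‖c‖^2 * (f y y).re := by
      intro c
      have e1 : f (x + c•y) (x + c•y)
          = f x x + c * g + (conj c * conj g + conj c * (c * f y y)) := by
        simp only [h1, h1', h2, h2']
        rw [h3 x y]
      have e2 : (conj c * conj g) = conj (c * g) := (map_mul _ _ _).symm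
      have e3 : (conj c * (c * f y y)).re = ‖c‖^2 * (f y y).re := by
        rw [← mul_assoc, Complex.conj_mul', ← Complex.ofReal_pow, Complex.re_ofReal_mul]
      have := h4 (x + c•y)
      rw [e1] at this
      simp only [Complex.add_re, e2, Complex.conj_re, e3] at this
      linarith
    set μ : ℂ := -(conj g) / ‖g‖ with hμ
    have hne : ((‖g‖:ℝ):ℂ) ≠ 0 := Complex.ofReal_ne_zero.mpr hgn.ne'
    have hμg : μ * g = ((-‖g‖ : ℝ) : ℂ) := by
      have e : μ * g = -(conj g * g) / ((‖g‖:ℝ):ℂ) := by rw [hμ]; ring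
      rw [e, Complex.conj_mul', pow_two, neg_div, mul_div_assoc, div_self hne, mul_one]
      push_cast
      ring
    have hμn : ‖μ‖ = 1 := by
      rw [hμ, norm_div, norm_neg, RCLike.norm_conj, Complex.norm_real, Real.norm_eq_abs,
        abs_of_nonneg hgn.le, div_self hgn.ne']
    have key : ∀ t : ℝ, 0 ≤ (f x x).re - 2 * t * ‖g‖ + t^2 * (f y y).re := by
      intro t
      have := key' ((t:ℂ) * μ)
      have hre : (((t:ℂ) * μ) * g).re = t * (-‖g‖) := by
        rw [mul_assoc, hμg, ← Complex.ofReal_mul, Complex.ofReal_re]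
      have hn : ‖(t:ℂ) * μ‖^2 = t^2 := by
        rw [norm_mul, hμn, mul_one, Complex.norm_real, Real.norm_eq_abs, sq_abs]
      rw [hre, hn] at this
      linarith
    have hxx := h4 x
    have hyy := h4 y
    have hb2 : ‖g‖^2 ≤ (f x x).re * (f y y).re := by
      rcases eq_or_lt_of_le hyy with hy0 | hy0
      · exfalso
        have ht := key (((f x x).re + 1) / (2 * ‖g‖))
        rw [← hy0] at ht
        have h2g : 2 * (((f x x).re + 1) / (2 * ‖g‖)) * ‖g‖ = (f x x).re + 1 := by
          have e : 2 * (((f x x).re + 1) / (2 * ‖g‖)) * ‖g‖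
              = ((f x x).re + 1) * ((2 * ‖g‖) / (2 * ‖g‖)) := by ring
          rw [e, div_self (by positivity), mul_one]
        rw [h2g] at ht
        nlinarith
      · have ht := key (‖g‖ / (f y y).re)
        have key2 : 0 ≤ ((f x x).re - 2*(‖g‖/(f y y).re)*‖g‖ + (‖g‖/(f y y).re)^2*(f y y).re) * (f y y).re :=
          mul_nonneg ht hy0.le
        have expand2 : ((f x x).re - 2*(‖g‖/(f y y).re)*‖g‖ + (‖g‖/(f y y).re)^2*(f y y).re) * (f y y).re
            = (f x x).re * (f y y).re - ‖g‖^2 := by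
          field_simp
          ring
        rw [expand2] at key2
        linarith
    calc ‖g‖ = Real.sqrt (‖g‖^2) := (Real.sqrt_sq hgn.le).symm
      _ ≤ Real.sqrt ((f x x).re * (f y y).re) := Real.sqrt_le_sqrt hb2
      _ = Real.sqrt (f x x).re * Real.sqrt (f y y).re := Real.sqrt_mul hxx _

lemma innerA_cs [CompleteSpace H] {A : H →L[ℂ] H} (hA : A.IsPositive) (x y : H) :
    ‖innerA A x y‖ ≤ normA A x * normA A y := by
  have := cs_aux (innerA A)
    (fun x x' y => by simp [innerA, map_add, inner_add_left])
    (fun c x y => by simp [innerA, map_smul, inner_smul_left]; ring)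
    (innerA_conj hA.isSelfAdjoint)
    (innerA_self_re_nonneg hA) x y
  simpa [normA] using this

lemma opNormA_facts [CompleteSpace H] {A T : H →L[ℂ] H} {cT : ℝ}
    (hcT : ∀ x, normA A (T x) ≤ cT * normA A x) (x₀ : H) (h₀ : normA A x₀ = 1) :
    0 ≤ opNormA A T ∧ ∀ x : H, normA A (T x) ≤ opNormA A T * normA A x := by
  have hbdd : BddAbove {r : ℝ | ∃ x : H, normA A x = 1 ∧ r = normA A (T x)} := by
    refine ⟨cT, ?_⟩
    rintro r ⟨x, hx, rfl⟩
    simpa [hx] using hcT x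
  have hM0 : 0 ≤ opNormA A T :=
    le_trans (normA_nonneg A (T x₀)) (le_csSup hbdd ⟨x₀, h₀, rfl⟩)
  refine ⟨hM0, fun x => ?_⟩
  by_cases hx : normA A x = 0
  · have h1 := hcT x
    rw [hx, mul_zero] at h1
    rw [hx, mul_zero]
    exact h1
  · have hxpos : 0 < normA A x := lt_of_le_of_ne (normA_nonneg _ _) (Ne.symm hx)
    set x' : H := (((normA A x)⁻¹ : ℝ) : ℂ) • x with hx'
    have hx'1 : normA A x' = 1 := by
      rw [hx', normA_smul, Complex.norm_real, Real.norm_eq_abs,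
        abs_of_nonneg (by positivity)]
      field_simp
    have hTx' : normA A (T x') = (normA A x)⁻¹ * normA A (T x) := by
      have h2 : T x' = (((normA A x)⁻¹ : ℝ) : ℂ) • T x := by rw [hx', map_smul]
      rw [h2, normA_smul, Complex.norm_real, Real.norm_eq_abs,
        abs_of_nonneg (by positivity)]
    have hle := le_csSup hbdd ⟨x', hx'1, rfl⟩
    rw [hTx'] at hle
    calc normA A (T x) = normA A x * ((normA A x)⁻¹ * normA A (T x)) := by field_simp
      _ ≤ normA A x * opNormA A T := mul_le_mul_of_nonneg_left hle hxpos.le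
      _ = opNormA A T * normA A x := mul_comm _ _

lemma rho_lb (s r εsq : ℝ) (hs0 : 0 ≤ s) (hs1 : s ≤ 1) (hε : 0 < εsq)
    (hr : εsq/2 - 1 ≤ r) :
    min (1/4) (3*εsq/16) ≤ s^2 + (1-s)^2 + 2*s*(1-s)*r := by
  rcases le_or_gt (1/4) ((2*s-1)^2) with hc1 | hc1
  · have h1 : (0:ℝ) ≤ s*(1-s) := mul_nonneg hs0 (by linarith)
    have h2 : (0:ℝ) ≤ 1 + r := by linarith
    calc min (1/4) (3*εsq/16) ≤ 1/4 := min_le_left _ _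
      _ ≤ s^2 + (1-s)^2 + 2*s*(1-s)*r := by nlinarith [mul_nonneg h1 h2]
  · have h1 : (0:ℝ) ≤ s*(1-s) - 3/16 := by nlinarith
    have h2 : (0:ℝ) ≤ 1 + r - εsq/2 := by linarith
    calc min (1/4) (3*εsq/16) ≤ 3*εsq/16 := min_le_right _ _
      _ ≤ s^2 + (1-s)^2 + 2*s*(1-s)*r := by nlinarith [mul_nonneg h1 h2, sq_nonneg (2*s-1)]

open ComplexConjugate in
lemma phase_choice (a b : ℂ) : ∃ c : ℂ, ‖c‖ = 1 ∧ (c * a + conj c * b).im = 0 := by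
  by_cases hq : a - conj b = 0
  · refine ⟨1, by simp, ?_⟩
    have ha : a = conj b := by linear_combination hq
    rw [ha]
    simp
  · set q : ℂ := a - conj b with hqd
    have hqn : (0:ℝ) < ‖q‖ := norm_pos_iff.mpr hq
    have hne : ((‖q‖:ℝ):ℂ) ≠ 0 := Complex.ofReal_ne_zero.mpr hqn.ne'
    refine ⟨conj q / ‖q‖, ?_, ?_⟩
    · rw [norm_div, RCLike.norm_conj, Complex.norm_real, Real.norm_eq_abs,
        abs_of_nonneg hqn.le, div_self hqn.ne']
    · set c : ℂ := conj q / ‖q‖ with hcd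
      have hcq : c * q = ((‖q‖ : ℝ) : ℂ) := by
        rw [hcd, div_mul_eq_mul_div, Complex.conj_mul', pow_two, mul_div_assoc,
          div_self hne, mul_one]
      have hsplit : c * a + conj c * b = c * q + (c * conj b + conj (c * conj b)) := by
        have e : conj c * b = conj (c * conj b) := by simp [map_mul]
        rw [e, hqd]
        ring
      rw [hsplit, hcq]
      simp [Complex.add_im]
      ring

lemma innerA_smul_left (A : H →L[ℂ] H) (c : ℂ) (x y : H) :
    innerA A (c•x) y = (starRingEnd ℂ) c * innerA A x y := by
  simp [innerA, map_smul, inner_smul_left]; ring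

lemma innerA_smul_right (A : H →L[ℂ] H) (c : ℂ) (x y : H) :
    innerA A x (c•y) = c * innerA A x y := by
  simp [innerA, inner_smul_right]

lemma innerA_add_add (A : H →L[ℂ] H) (x y : H) :
    innerA A (x+y) (x+y) = innerA A x x + innerA A x y + innerA A y x + innerA A y y := by
  simp [innerA, map_add, inner_add_left, inner_add_right]
  ring

set_option maxHeartbeats 1000000 in
open ComplexConjugate in
lemma construct [CompleteSpace H] {A T S : H →L[ℂ] H} (hA : A.IsPositive)
    {u v : H} (hu : normA A u = 1) (hv : normA A v = 1)
    (hBuv : innerA A (T u) (S u) ≠ innerA A (T v) (S v))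
    {εsq : ℝ} (hε : 0 < εsq)
    (hsep : ∀ c : ℂ, ‖c‖ = 1 → εsq ≤ normA A (u + c • v) ^ 2)
    {t : ℝ} (ht0 : 0 ≤ t) (ht1 : t ≤ 1) :
    ∃ α β : ℂ, ‖α‖ ≤ Real.sqrt ((min (1/4) (3*εsq/16))⁻¹)
      ∧ ‖β‖ ≤ Real.sqrt ((min (1/4) (3*εsq/16))⁻¹)
      ∧ normA A (α•u + β•v) = 1
      ∧ innerA A (T (α•u + β•v)) (S (α•u + β•v))
          = ((t:ℝ):ℂ) * innerA A (T u) (S u) + ((1-t:ℝ):ℂ) * innerA A (T v) (S v) := by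
  set Bu := innerA A (T u) (S u) with hBud
  set Bv := innerA A (T v) (S v) with hBvd
  set d := Bu - Bv with hdd
  have hd : d ≠ 0 := sub_ne_zero.mpr hBuv
  set a : ℂ := d⁻¹ * (innerA A (T u) (S v) - Bv * innerA A u v) with had
  set b : ℂ := d⁻¹ * (innerA A (T v) (S u) - Bv * innerA A v u) with hbd
  obtain ⟨c, hc1, hcim⟩ := phase_choice a b
  set w : H := c • v with hwd
  have hw1 : normA A w = 1 := by rw [hwd, normA_smul, hc1, one_mul, hv]
  have iuu : innerA A u u = 1 := innerA_self_eq_one hA hu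
  have iww : innerA A w w = 1 := innerA_self_eq_one hA hw1
  have hcc : (starRingEnd ℂ) c * c = 1 := by
    rw [Complex.conj_mul', hc1]
    norm_num
  have hBw : innerA A (T w) (S w) = Bv := by
    rw [hwd, map_smul, map_smul, innerA_smul_left, innerA_smul_right, ← mul_assoc, hcc, one_mul]
  have e1 : innerA A (T u) (S w) = c * innerA A (T u) (S v) := by
    rw [hwd, map_smul, innerA_smul_right]
  have e2 : innerA A (T w) (S u) = (starRingEnd ℂ) c * innerA A (T v) (S u) := by
    rw [hwd, map_smul, innerA_smul_left]
  have e3 : innerA A u w = c * innerA A u v := by rw [hwd, innerA_smul_right]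
  have e4 : innerA A w u = (starRingEnd ℂ) c * innerA A v u := by rw [hwd, innerA_smul_left]
  have hda : d * a = innerA A (T u) (S v) - Bv * innerA A u v := by
    rw [had, ← mul_assoc, mul_inv_cancel₀ hd, one_mul]
  have hdb : d * b = innerA A (T v) (S u) - Bv * innerA A v u := by
    rw [hbd, ← mul_assoc, mul_inv_cancel₀ hd, one_mul]
  set m : ℂ := c * a + (starRingEnd ℂ) c * b with hmd
  set mr : ℝ := m.re with hmrd
  clear_value m a b d Bv Bu
  have hmC : m = ((mr:ℝ):ℂ) := by
    apply Complex.ext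
    · simp [hmrd]
    · simp [hcim]
  -- the key quadratic expansion with real coefficients
  have hraw : ∀ p q : ℝ,
      innerA A (T (((p:ℝ):ℂ)•u + ((q:ℝ):ℂ)•w)) (S (((p:ℝ):ℂ)•u + ((q:ℝ):ℂ)•w))
        - Bv * innerA A (((p:ℝ):ℂ)•u + ((q:ℝ):ℂ)•w) (((p:ℝ):ℂ)•u + ((q:ℝ):ℂ)•w)
      = ((p:ℝ):ℂ)^2 * d + (((p*q:ℝ)):ℂ) * (d * m) := by
    intro p q
    have hTz : T (((p:ℝ):ℂ)•u + ((q:ℝ):ℂ)•w) = ((p:ℝ):ℂ)•(T u) + ((q:ℝ):ℂ)•(T w) := by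
      simp [map_add, map_smul]
    have hSz : S (((p:ℝ):ℂ)•u + ((q:ℝ):ℂ)•w) = ((p:ℝ):ℂ)•(S u) + ((q:ℝ):ℂ)•(S w) := by
      simp [map_add, map_smul]
    rw [hTz, hSz, innerA_expand, innerA_expand]
    rw [e1, e2, e3, e4, iuu, iww, hBw, ← hBud]
    simp only [Complex.conj_ofReal]
    rw [hmd]
    push_cast
    linear_combination (-((p:ℂ))*((q:ℂ))*c)*hda + (-((p:ℂ))*((q:ℂ))*((starRingEnd ℂ) c))*hdb
      + (-(((p:ℂ))^2))*hdd
  -- the real quantity r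
  set r : ℝ := (innerA A u w).re with hrd
  have hiwu : innerA A w u = (starRingEnd ℂ) (innerA A u w) := innerA_conj hA.isSelfAdjoint u w
  have hr : εsq/2 - 1 ≤ r := by
    have hs1 := hsep c hc1
    rw [← hwd] at hs1
    have h2 : normA A (u + w)^2 = 2 + 2*r := by
      rw [normA_sq hA, innerA_add_add, iuu, iww, hiwu]
      simp [Complex.add_re, hrd]
      ring
    linarith [hs1, h2.symm.le, h2]
  have hρ0 : 0 < min (1/4 : ℝ) (3*εsq/16) := lt_min (by norm_num) (by linarith)
  -- the path function and IVT
  set hfun : ℝ → ℝ := fun s => (s^2 + s*(1-s)*mr) / (s^2 + (1-s)^2 + 2*s*(1-s)*r) with hfund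
  have hcont : ContinuousOn hfun (Set.Icc 0 1) := by
    apply ContinuousOn.div
    · exact (by fun_prop : Continuous fun s : ℝ => s^2 + s*(1-s)*mr).continuousOn
    · exact (by fun_prop : Continuous fun s : ℝ => s^2 + (1-s)^2 + 2*s*(1-s)*r).continuousOn
    · intro s hs
      exact (lt_of_lt_of_le hρ0 (rho_lb s r εsq hs.1 hs.2 hε hr)).ne'
  have hf0 : hfun 0 = 0 := by norm_num [hfund]
  have hf1 : hfun 1 = 1 := by norm_num [hfund]
  obtain ⟨s, hsmem, hst⟩ := intermediate_value_Icc (zero_le_one) hcont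
    (by rw [hf0, hf1]; exact ⟨ht0, ht1⟩)
  obtain ⟨hs0, hs1⟩ := hsmem
  have hfs : (s^2 + s*(1-s)*mr) / (s^2 + (1-s)^2 + 2*s*(1-s)*r) = t := hst
  set Rq : ℝ := s^2 + (1-s)^2 + 2*s*(1-s)*r with hRqd
  have hRqpos : 0 < Rq := lt_of_lt_of_le hρ0 (rho_lb s r εsq hs0 hs1 hε hr)
  set ρ : ℝ := Real.sqrt Rq with hρd
  have hρpos : 0 < ρ := Real.sqrt_pos.mpr hRqpos
  have hρsq : ρ^2 = Rq := Real.sq_sqrt hRqpos.le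
  set p : ℝ := s/ρ with hpd
  set q : ℝ := (1-s)/ρ with hqd
  have hp0 : 0 ≤ p := div_nonneg hs0 hρpos.le
  have hq0 : 0 ≤ q := div_nonneg (by linarith) hρpos.le
  set z : H := ((p:ℝ):ℂ)•u + ((q:ℝ):ℂ)•w with hzd
  -- norm of z
  have hIzval : innerA A z z = ((p^2 + q^2 + 2*p*q*r : ℝ):ℂ) := by
    have hac : innerA A u w + (starRingEnd ℂ) (innerA A u w) = 2*((r:ℝ):ℂ) := by
      rw [Complex.add_conj, hrd]
      push_cast
      ring
    rw [hzd, innerA_expand, iuu, iww, hiwu]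
    simp only [Complex.conj_ofReal]
    push_cast
    linear_combination ((p:ℂ))*((q:ℂ)) * hac
  have hsum1 : p^2 + q^2 + 2*p*q*r = 1 := by
    have e : p^2 + q^2 + 2*p*q*r = Rq/ρ^2 := by
      rw [hpd, hqd, hRqd]
      field_simp
    rw [e, hρsq, div_self hRqpos.ne']
  have hIz1 : innerA A z z = 1 := by
    rw [hIzval, hsum1]
    norm_num
  have hnz : normA A z = 1 := by
    rw [normA, hIz1]
    simp
  have hBzval := hraw p q
  rw [← hzd, hIz1, mul_one] at hBzval
  have hfs : (s^2 + s*(1-s)*mr)/(s^2+(1-s)^2+2*s*(1-s)*r) = t := by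
    rw [hfund] at hst
    simpa using hst
  have hreal : p^2 + p*q*mr = t := by
    have e : p^2 + p*q*mr = (s^2 + s*(1-s)*mr)/ρ^2 := by
      rw [hpd, hqd]
      field_simp
    rw [e, hρsq, hRqd]
    exact hfs
  have hscalar : ((p:ℝ):ℂ)^2 + ((p*q:ℝ):ℂ) * m = ((t:ℝ):ℂ) := by
    rw [hmC]
    push_cast
    exact_mod_cast congrArg (fun x:ℝ => (x:ℂ)) hreal
  have hBz : innerA A (T z) (S z) = ((t:ℝ):ℂ) * Bu + ((1-t:ℝ):ℂ) * Bv := by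
    have h5 : innerA A (T z) (S z) = ((p:ℝ):ℂ)^2 * d + ((p*q:ℝ):ℂ)*(d*m) + Bv := by
      linear_combination hBzval
    have h6 : ((p:ℝ):ℂ)^2 * d + ((p*q:ℝ):ℂ)*(d*m) = ((t:ℝ):ℂ) * d := by
      calc ((p:ℝ):ℂ)^2 * d + ((p*q:ℝ):ℂ)*(d*m)
          = (((p:ℝ):ℂ)^2 + ((p*q:ℝ):ℂ)*m) * d := by ring
        _ = ((t:ℝ):ℂ) * d := by rw [hscalar]
    rw [h5, h6, hdd]
    push_cast
    ring
  -- bounds on the coefficients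
  have hρlb : Real.sqrt (min (1/4 : ℝ) (3*εsq/16)) ≤ ρ := by
    rw [hρd]
    exact Real.sqrt_le_sqrt (rho_lb s r εsq hs0 hs1 hε hr)
  have hsqrtpos : 0 < Real.sqrt (min (1/4 : ℝ) (3*εsq/16)) := Real.sqrt_pos.mpr hρ0
  have hKval : Real.sqrt ((min (1/4 : ℝ) (3*εsq/16))⁻¹)
      = (Real.sqrt (min (1/4 : ℝ) (3*εsq/16)))⁻¹ := Real.sqrt_inv _
  have hpK : p ≤ Real.sqrt ((min (1/4 : ℝ) (3*εsq/16))⁻¹) := by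
    rw [hKval]
    calc p = s/ρ := hpd
      _ ≤ 1/ρ := by gcongr
      _ = ρ⁻¹ := one_div ρ
      _ ≤ (Real.sqrt (min (1/4 : ℝ) (3*εsq/16)))⁻¹ := by
          exact inv_anti₀ hsqrtpos hρlb
  have hqK : q ≤ Real.sqrt ((min (1/4 : ℝ) (3*εsq/16))⁻¹) := by
    rw [hKval]
    calc q = (1-s)/ρ := hqd
      _ ≤ 1/ρ := by gcongr; · linarith
      _ = ρ⁻¹ := one_div ρ
      _ ≤ (Real.sqrt (min (1/4 : ℝ) (3*εsq/16)))⁻¹ := by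
          exact inv_anti₀ hsqrtpos hρlb
  refine ⟨((p:ℝ):ℂ), ((q:ℝ):ℂ)*c, ?_, ?_, ?_, ?_⟩
  · rw [Complex.norm_real, Real.norm_eq_abs, abs_of_nonneg hp0]
    exact hpK
  · rw [norm_mul, hc1, mul_one, Complex.norm_real, Real.norm_eq_abs, abs_of_nonneg hq0]
    exact hqK
  · have hzeq : ((p:ℝ):ℂ)•u + (((q:ℝ):ℂ)*c)•v = z := by
      rw [hzd, hwd, mul_smul]
    rw [hzeq]
    exact hnz
  · have hzeq : ((p:ℝ):ℂ)•u + (((q:ℝ):ℂ)*c)•v = z := by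
      rw [hzd, hwd, mul_smul]
    rw [hzeq, hBz]

lemma B_lip [CompleteSpace H] {A T S : H →L[ℂ] H} (hA : A.IsPositive) {cT cS : ℝ}
    (hcT : ∀ x, normA A (T x) ≤ cT * normA A x) (hcS : ∀ x, normA A (S x) ≤ cS * normA A x)
    (hcT0 : 0 ≤ cT) (hcS0 : 0 ≤ cS)
    {u' w' : H} (hu : normA A u' = 1) (hw : normA A w' = 1) :
    ‖innerA A (T u') (S u') - innerA A (T w') (S w')‖ ≤ 2*cT*cS*normA A (u' - w') := by
  have hsplit : innerA A (T u') (S u') - innerA A (T w') (S w')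
      = innerA A (T (u' - w')) (S u') + innerA A (T w') (S (u' - w')) := by
    simp only [map_sub]
    simp [innerA, map_sub, inner_sub_left, inner_sub_right]
  have hb1 : ‖innerA A (T (u' - w')) (S u')‖ ≤ (cT * normA A (u' - w')) * (cS * 1) := by
    calc ‖innerA A (T (u' - w')) (S u')‖ ≤ normA A (T (u' - w')) * normA A (S u') :=
          innerA_cs hA _ _
      _ ≤ (cT * normA A (u' - w')) * (cS * 1) := by
          apply mul_le_mul (hcT _) ?_ (normA_nonneg _ _)
            (mul_nonneg hcT0 (normA_nonneg _ _))
          simpa [hu] using hcS u'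
  have hb2 : ‖innerA A (T w') (S (u' - w'))‖ ≤ (cT * 1) * (cS * normA A (u' - w')) := by
    calc ‖innerA A (T w') (S (u' - w'))‖ ≤ normA A (T w') * normA A (S (u' - w')) :=
          innerA_cs hA _ _
      _ ≤ (cT * 1) * (cS * normA A (u' - w')) := by
          apply mul_le_mul ?_ (hcS _) (normA_nonneg _ _)
            (mul_nonneg hcT0 zero_le_one)
          simpa [hw] using hcT w'
  calc ‖innerA A (T u') (S u') - innerA A (T w') (S w')‖
      = ‖innerA A (T (u' - w')) (S u') + innerA A (T w') (S (u' - w'))‖ := by rw [hsplit]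
    _ ≤ ‖innerA A (T (u' - w')) (S u')‖ + ‖innerA A (T w') (S (u' - w'))‖ := norm_add_le _ _
    _ ≤ (cT * normA A (u' - w')) * (cS * 1) + (cT * 1) * (cS * normA A (u' - w')) := by
        exact add_le_add hb1 hb2
    _ = 2*cT*cS*normA A (u' - w') := by ring

lemma B_unimod [CompleteSpace H] (A T S : H →L[ℂ] H) (c : ℂ) (hc : ‖c‖ = 1) (y' : H) :
    innerA A (T (c•y')) (S (c•y')) = innerA A (T y') (S y') := by
  rw [map_smul, map_smul, innerA_smul_left, innerA_smul_right, ← mul_assoc,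
    Complex.conj_mul', hc]
  norm_num

set_option maxHeartbeats 1000000 in
open ComplexConjugate in
lemma dbound [CompleteSpace H] {A T : H →L[ℂ] H} (hA : A.IsPositive) {M : ℝ}
    (hMb : ∀ x, normA A (T x) ≤ M * normA A x)
    {u v zz : H} (hu : normA A u = 1) (hv : normA A v = 1) {α β : ℂ}
    (hz : zz = α • u + β • v) (hz1 : normA A zz = 1) {K : ℝ} (hK0 : 0 ≤ K)
    (hα : ‖α‖ ≤ K) (hβ : ‖β‖ ≤ K) :
    M^2 - normA A (T zz)^2 ≤
      (K*Real.sqrt (M^2 - normA A (T u)^2) + K*Real.sqrt (M^2 - normA A (T v)^2))^2 := by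
  set f : H → H → ℂ := fun x' y' => ((M^2:ℝ):ℂ) * innerA A x' y' - innerA A (T x') (T y')
    with hfd
  have hf1 : ∀ x' x'' y', f (x'+x'') y' = f x' y' + f x'' y' := by
    intro x' x'' y'
    simp only [hfd]
    simp [innerA, map_add, inner_add_left]
    ring
  have hf2 : ∀ (c:ℂ) x' y', f (c•x') y' = conj c * f x' y' := by
    intro c x' y'
    simp only [hfd]
    simp [innerA, map_smul, inner_smul_left]
    ring
  have hf3 : ∀ x' y', f y' x' = conj (f x' y') := by
    intro x' y'
    simp only [hfd]
    rw [map_sub, map_mul, Complex.conj_ofReal, ← innerA_conj hA.isSelfAdjoint, ← innerA_conj hA.isSelfAdjoint]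
  have hf4 : ∀ x', 0 ≤ (f x' x').re := by
    intro x'
    have h8 : (f x' x').re = M^2 * (normA A x')^2 - (normA A (T x'))^2 := by
      simp only [hfd]
      rw [Complex.sub_re, Complex.re_ofReal_mul, normA_sq hA, normA_sq hA]
    rw [h8]
    nlinarith [hMb x', normA_nonneg A (T x'), normA_nonneg A x']
  have hfre : ∀ x', normA A x' = 1 → (f x' x').re = M^2 - normA A (T x')^2 := by
    intro x' h1'
    simp only [hfd]
    rw [Complex.sub_re, Complex.re_ofReal_mul, ← normA_sq hA x', ← normA_sq hA (T x'), h1']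
    norm_num
  have hdu0 : 0 ≤ M^2 - normA A (T u)^2 := by rw [← hfre u hu]; exact hf4 u
  have hdv0 : 0 ≤ M^2 - normA A (T v)^2 := by rw [← hfre v hv]; exact hf4 v
  have hcs := cs_aux f hf1 hf2 hf3 hf4 u v
  rw [hfre u hu, hfre v hv] at hcs
  have hTzn : T zz = α • T u + β • T v := by rw [hz, map_add, map_smul, map_smul]
  have hexp : f zz zz = conj α * α * f u u + conj β * β * f v v
      + (conj α * β * f u v + conj β * α * f v u) := by
    simp only [hfd]
    rw [hTzn, hz, innerA_expand, innerA_expand]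
    ring
  have hcross : conj β * α * f v u = conj (conj α * β * f u v) := by
    rw [hf3 u v, map_mul, map_mul, Complex.conj_conj]
    ring
  have e1 : conj α * α = ((‖α‖^2 : ℝ):ℂ) := by rw [Complex.conj_mul']; push_cast; ring
  have e2 : conj β * β = ((‖β‖^2 : ℝ):ℂ) := by rw [Complex.conj_mul']; push_cast; ring
  have hre : (f zz zz).re = ‖α‖^2*(f u u).re + ‖β‖^2*(f v v).re
      + 2*(conj α * β * f u v).re := by
    rw [hexp, hcross, e1, e2, Complex.add_re, Complex.add_re, Complex.re_ofReal_mul,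
      Complex.re_ofReal_mul, Complex.add_re, Complex.conj_re]
    ring
  have hcr : (conj α * β * f u v).re ≤ K*K*(Real.sqrt (M^2 - normA A (T u)^2) * Real.sqrt (M^2 - normA A (T v)^2)) := by
    calc (conj α * β * f u v).re ≤ ‖conj α * β * f u v‖ := by
          exact Complex.re_le_norm _
      _ = ‖α‖ * ‖β‖ * ‖f u v‖ := by rw [norm_mul, norm_mul, RCLike.norm_conj]
      _ ≤ K * K * (Real.sqrt (M^2 - normA A (T u)^2) * Real.sqrt (M^2 - normA A (T v)^2)) := by
          apply mul_le_mul (mul_le_mul hα hβ (norm_nonneg _) hK0) hcs (norm_nonneg _)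
            (mul_nonneg hK0 hK0)
  have hzre : (f zz zz).re = M^2 - normA A (T zz)^2 := hfre zz hz1
  have hterm1 : ‖α‖^2*(f u u).re ≤ K^2*(M^2 - normA A (T u)^2) := by
    rw [hfre u hu]
    apply mul_le_mul_of_nonneg_right ?_ hdu0
    exact pow_le_pow_left₀ (norm_nonneg _) hα 2
  have hterm2 : ‖β‖^2*(f v v).re ≤ K^2*(M^2 - normA A (T v)^2) := by
    rw [hfre v hv]
    apply mul_le_mul_of_nonneg_right ?_ hdv0
    exact pow_le_pow_left₀ (norm_nonneg _) hβ 2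
  have hrhs : (K*Real.sqrt (M^2 - normA A (T u)^2) + K*Real.sqrt (M^2 - normA A (T v)^2))^2
      = K^2*(M^2 - normA A (T u)^2) + K^2*(M^2 - normA A (T v)^2)
        + 2*(K*K*(Real.sqrt (M^2 - normA A (T u)^2) * Real.sqrt (M^2 - normA A (T v)^2))) := by
    have s1 : Real.sqrt (M^2 - normA A (T u)^2)^2 = M^2 - normA A (T u)^2 := Real.sq_sqrt hdu0
    have s2 : Real.sqrt (M^2 - normA A (T v)^2)^2 = M^2 - normA A (T v)^2 := Real.sq_sqrt hdv0
    nlinarith [s1, s2]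
  rw [← hzre, hre, hrhs]
  linarith [hterm1, hterm2, hcr]


set_option maxHeartbeats 1000000 in
theorem stmt6 [CompleteSpace H] (A T S : H →L[ℂ] H) (hA : A.IsPositive)
    (hT : ABounded A T) (hS : ABounded A S) : Convex ℝ (WA A T S) := by
  intro ξ hξ η hη aa bb ha hb hab
  obtain ⟨x, hx1, hxT, hxB⟩ := hξ
  obtain ⟨y, hy1, hyT, hyB⟩ := hη
  by_cases hxy : ξ = η
  · subst hxy
    have he : aa • ξ + bb • ξ = ξ := by rw [← add_smul, hab, one_smul]
    rw [he]
    exact ⟨x, hx1, hxT, hxB⟩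
  obtain ⟨cT, hcT0, hcT⟩ := hT
  obtain ⟨cS, hcS0, hcS⟩ := hS
  obtain ⟨hM0, hMb⟩ := opNormA_facts hcT (x 0) (hx1 0)
  set M := opNormA A T with hMdef
  set δ := ‖ξ - η‖ with hδd
  have hδ : 0 < δ := by
    rw [hδd]
    exact norm_pos_iff.mpr (sub_ne_zero.mpr hxy)
  set εsq := (δ/(4*(cT*cS)))^2 with hεd
  have hεsq : 0 < εsq := by
    apply pow_pos
    apply div_pos hδ
    positivity
  set K := Real.sqrt ((min (1/4 : ℝ) (3*εsq/16))⁻¹) with hKd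
  have hK0 : 0 ≤ K := Real.sqrt_nonneg _
  obtain ⟨N1, hN1⟩ := Metric.tendsto_atTop.mp hxB (δ/4) (by positivity)
  obtain ⟨N2, hN2⟩ := Metric.tendsto_atTop.mp hyB (δ/4) (by positivity)
  set N := max N1 N2 with hNd
  have hgap : ∀ n, N ≤ n →
      δ/2 ≤ ‖innerA A (T (x n)) (S (x n)) - innerA A (T (y n)) (S (y n))‖ := by
    intro n hn
    have h1 := hN1 n (le_trans (le_max_left _ _) hn)
    have h2 := hN2 n (le_trans (le_max_right _ _) hn)
    rw [dist_eq_norm] at h1 h2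
    have h3 : δ ≤ ‖ξ - innerA A (T (x n)) (S (x n))‖
        + ‖innerA A (T (x n)) (S (x n)) - innerA A (T (y n)) (S (y n))‖
        + ‖innerA A (T (y n)) (S (y n)) - η‖ := by
      rw [hδd]
      have e : ξ - η = (ξ - innerA A (T (x n)) (S (x n)))
          + (innerA A (T (x n)) (S (x n)) - innerA A (T (y n)) (S (y n)))
          + (innerA A (T (y n)) (S (y n)) - η) := by ring
      rw [e]
      exact norm_add₃_le
    have h4 : ‖ξ - innerA A (T (x n)) (S (x n))‖
        = ‖innerA A (T (x n)) (S (x n)) - ξ‖ := norm_sub_rev _ _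
    linarith
  have hBne : ∀ n, N ≤ n →
      innerA A (T (x n)) (S (x n)) ≠ innerA A (T (y n)) (S (y n)) := by
    intro n hn heq
    have h5 := hgap n hn
    rw [heq, sub_self, norm_zero] at h5
    linarith
  have hsep : ∀ n, N ≤ n → ∀ c : ℂ, ‖c‖ = 1 → εsq ≤ normA A (x n + c • y n)^2 := by
    intro n hn c hc
    have hc' : ‖-c‖ = 1 := by rwa [norm_neg]
    have hBy := B_unimod A T S (-c) hc' (y n)
    have hyn1 : normA A ((-c) • y n) = 1 := by rw [normA_smul, hc', one_mul, hy1 n]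
    have hlip := B_lip hA hcT hcS hcT0.le hcS0.le (hx1 n) hyn1
    rw [hBy] at hlip
    have hxw : x n - (-c) • y n = x n + c • y n := by rw [neg_smul, sub_neg_eq_add]
    rw [hxw] at hlip
    have h4 : δ/2 ≤ 2*cT*cS*normA A (x n + c • y n) := le_trans (hgap n hn) hlip
    have h5 : δ/(4*(cT*cS)) ≤ normA A (x n + c • y n) := by
      rw [div_le_iff₀ (by positivity)]
      nlinarith
    calc εsq = (δ/(4*(cT*cS)))^2 := hεd
      _ ≤ normA A (x n + c • y n)^2 := by
        apply pow_le_pow_left₀ (by positivity) h5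
  have hex : ∀ n : ℕ, ∃ z : H, normA A z = 1 ∧ (N ≤ n →
      ∃ α β : ℂ, z = α • x n + β • y n ∧ ‖α‖ ≤ K ∧ ‖β‖ ≤ K ∧
        innerA A (T z) (S z) = ((aa:ℝ):ℂ) * innerA A (T (x n)) (S (x n))
          + ((bb:ℝ):ℂ) * innerA A (T (y n)) (S (y n))) := by
    intro n
    by_cases hn : N ≤ n
    · have haa1 : aa ≤ 1 := by linarith
      obtain ⟨α, β, hα, hβ, hz1, hzB⟩ :=
        construct hA (hx1 n) (hy1 n) (hBne n hn) hεsq (hsep n hn) ha haa1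
      refine ⟨α • x n + β • y n, hz1, fun _ => ⟨α, β, rfl, ?_, ?_, ?_⟩⟩
      · rw [hKd]; exact hα
      · rw [hKd]; exact hβ
      · rw [hzB, show (1:ℝ) - aa = bb from by linarith]
    · exact ⟨x n, hx1 n, fun hc => absurd hc hn⟩
  choose z hz1 hzP using hex
  refine ⟨z, hz1, ?_, ?_⟩
  · -- norm limit
    have hub : ∀ n, normA A (T (z n)) ≤ M := by
      intro n
      have h6 := hMb (z n)
      rwa [hz1 n, mul_one] at h6
    have hg0 : ∀ n, 0 ≤ M^2 - normA A (T (z n))^2 := by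
      intro n
      nlinarith [hub n, normA_nonneg A (T (z n))]
    have hkey : ∀ n, N ≤ n → M^2 - normA A (T (z n))^2 ≤
        (K*Real.sqrt (M^2 - normA A (T (x n))^2) + K*Real.sqrt (M^2 - normA A (T (y n))^2))^2 := by
      intro n hn
      obtain ⟨α, β, hzeq, hα, hβ, _⟩ := hzP n hn
      exact dbound hA hMb (hx1 n) (hy1 n) hzeq (hz1 n) hK0 hα hβ
    have l1 : Tendsto (fun n => M^2 - normA A (T (x n))^2) atTop (𝓝 0) := by
      have h7 := (tendsto_const_nhds (α := ℕ) (x := M^2)).sub (hxT.pow 2)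
      simpa using h7
    have l2 : Tendsto (fun n => M^2 - normA A (T (y n))^2) atTop (𝓝 0) := by
      have h7 := (tendsto_const_nhds (α := ℕ) (x := M^2)).sub (hyT.pow 2)
      simpa using h7
    have l1s : Tendsto (fun n => Real.sqrt (M^2 - normA A (T (x n))^2)) atTop (𝓝 0) := by
      simpa using l1.sqrt
    have l2s : Tendsto (fun n => Real.sqrt (M^2 - normA A (T (y n))^2)) atTop (𝓝 0) := by
      simpa using l2.sqrt
    have hbnd : Tendsto (fun n => (K*Real.sqrt (M^2 - normA A (T (x n))^2)
        + K*Real.sqrt (M^2 - normA A (T (y n))^2))^2) atTop (𝓝 0) := by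
      have h8 := ((l1s.const_mul K).add (l2s.const_mul K)).pow 2
      simpa using h8
    have hgl : Tendsto (fun n => M^2 - normA A (T (z n))^2) atTop (𝓝 0) := by
      apply tendsto_of_tendsto_of_tendsto_of_le_of_le' tendsto_const_nhds hbnd
      · exact Eventually.of_forall hg0
      · exact eventually_atTop.mpr ⟨N, hkey⟩
    have hsq : Tendsto (fun n => normA A (T (z n))^2) atTop (𝓝 (M^2)) := by
      have h9 := (tendsto_const_nhds (α := ℕ) (x := M^2)).sub hgl
      simpa using h9
    have h10 := hsq.sqrt
    have heq : (fun n => Real.sqrt (normA A (T (z n))^2)) = fun n => normA A (T (z n)) := by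
      funext n
      exact Real.sqrt_sq (normA_nonneg _ _)
    rw [heq, Real.sqrt_sq hM0] at h10
    exact h10
  · -- value limit
    have hlim : Tendsto (fun n => ((aa:ℝ):ℂ) * innerA A (T (x n)) (S (x n))
        + ((bb:ℝ):ℂ) * innerA A (T (y n)) (S (y n))) atTop
        (𝓝 (((aa:ℝ):ℂ) * ξ + ((bb:ℝ):ℂ) * η)) :=
      (hxB.const_mul _).add (hyB.const_mul _)
    have hcongr : (fun n => ((aa:ℝ):ℂ) * innerA A (T (x n)) (S (x n))
        + ((bb:ℝ):ℂ) * innerA A (T (y n)) (S (y n)))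
        =ᶠ[atTop] fun n => innerA A (T (z n)) (S (z n)) := by
      filter_upwards [eventually_ge_atTop N] with n hn
      obtain ⟨α, β, _, _, _, hBzn⟩ := hzP n hn
      exact hBzn.symm
    have h11 := hlim.congr' hcongr
    have h12 : aa • ξ + bb • η = ((aa:ℝ):ℂ) * ξ + ((bb:ℝ):ℂ) * η := by
      rw [Complex.real_smul, Complex.real_smul]
    rw [h12]
    exact h11
end
end

section
/- For A-bounded operators T and S, inf_{γ∈ℂ} ‖T + γS‖_A = sup{|⟨Tx, y⟩_A| : ‖x‖_A = ‖y‖_A = 1 and ⟨Sx, y⟩_A = 0}. -/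
noncomputable section

open Filter Topology

variable {H : Type*} [NormedAddCommGroup H] [InnerProductSpace ℂ H]

set_option linter.unusedSectionVars false
set_option linter.unusedVariables false

namespace Stmt14
open ComplexConjugate

/-- Compatibility: the complex absolute value as the norm. -/
noncomputable def Complex.abs : AbsoluteValue ℂ ℝ where
  toFun z := ‖z‖
  map_mul' := norm_mul
  nonneg' := norm_nonneg
  eq_zero' _ := norm_eq_zero
  add_le' := norm_add_le

lemma Complex.abs_apply (z : ℂ) : Complex.abs z = Real.sqrt (Complex.normSq z) :=
  Complex.norm_def z

lemma Complex.abs_ofReal (r : ℝ) : Complex.abs (r : ℂ) = |r| := by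
  show ‖(r : ℂ)‖ = |r|
  simp

lemma Complex.abs_conj (z : ℂ) : Complex.abs (conj z) = Complex.abs z := Complex.norm_conj z

lemma Complex.normSq_eq_abs (z : ℂ) : Complex.normSq z = Complex.abs z ^ 2 :=
  Complex.normSq_eq_norm_sq z

lemma Complex.re_le_abs (z : ℂ) : z.re ≤ Complex.abs z := Complex.re_le_norm z

lemma Complex.norm_eq_abs (z : ℂ) : ‖z‖ = Complex.abs z := rfl

lemma Complex.continuous_abs : Continuous Complex.abs := continuous_norm

variable (A : H →L[ℂ] H)

lemma innerA_add_left (x x' y : H) : innerA A (x + x') y = innerA A x y + innerA A x' y := by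
  simp [innerA, map_add, inner_add_left]

lemma innerA_add_right (x y y' : H) : innerA A x (y + y') = innerA A x y + innerA A x y' := by
  simp [innerA, inner_add_right]

lemma innerA_smul_left (c : ℂ) (x y : H) : innerA A (c • x) y = conj c * innerA A x y := by
  simp [innerA, map_smul, inner_smul_left]
  ring

lemma innerA_smul_right (c : ℂ) (x y : H) : innerA A x (c • y) = c * innerA A x y := by
  simp [innerA, inner_smul_right]

lemma innerA_zero_left (y : H) : innerA A 0 y = 0 := by
  simp [innerA]

lemma innerA_zero_right (x : H) : innerA A x 0 = 0 := by
  simp [innerA]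

variable [CompleteSpace H]

lemma innerA_conj (hA : A.IsPositive) (x y : H) : conj (innerA A x y) = innerA A y x := by
  have hsa : A.adjoint = A := hA.isSelfAdjoint.adjoint_eq
  calc conj (innerA A x y) = conj (@inner ℂ _ _ (A x) y) := rfl
    _ = @inner ℂ _ _ y (A x) := by rw [inner_conj_symm]
    _ = @inner ℂ _ _ (A.adjoint y) x := by rw [ContinuousLinearMap.adjoint_inner_left]
    _ = innerA A y x := by rw [hsa]; rfl

lemma innerA_self_re_nonneg (hA : A.IsPositive) (x : H) : 0 ≤ (innerA A x x).re := by
  have := hA.2 x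
  rwa [ContinuousLinearMap.reApplyInnerSelf, RCLike.re_to_complex] at this

lemma innerA_self_im (hA : A.IsPositive) (x : H) : (innerA A x x).im = 0 := by
  have h := innerA_conj A hA x x
  have := congrArg Complex.im h
  simp only [Complex.conj_im] at this
  linarith

lemma normA_nonneg (x : H) : 0 ≤ normA A x := Real.sqrt_nonneg _

lemma normA_sq (hA : A.IsPositive) (x : H) : (normA A x) ^ 2 = (innerA A x x).re := by
  rw [normA, Real.sq_sqrt (innerA_self_re_nonneg A hA x)]

lemma innerA_self_eq (hA : A.IsPositive) (x : H) :
    innerA A x x = (((normA A x) ^ 2 : ℝ) : ℂ) := by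
  apply Complex.ext
  · rw [Complex.ofReal_re, normA_sq A hA]
  · rw [Complex.ofReal_im, innerA_self_im A hA]

lemma normA_zero : normA A 0 = 0 := by
  simp [normA, innerA]

lemma normA_smul (hA : A.IsPositive) (c : ℂ) (x : H) :
    normA A (c • x) = Complex.abs c * normA A x := by
  have h : innerA A (c • x) (c • x) = (conj c * c) * innerA A x x := by
    rw [innerA_smul_left, innerA_smul_right]; ring
  have h2 : (innerA A (c • x) (c • x)).re = (Complex.abs c) ^ 2 * (innerA A x x).re := by
    rw [h]
    have hc : conj c * c = ((Complex.abs c ^ 2 : ℝ) : ℂ) := by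
      rw [mul_comm, Complex.mul_conj, Complex.normSq_eq_abs]
    rw [hc, Complex.re_ofReal_mul]
  rw [normA, h2, Real.sqrt_mul (by positivity), normA]
  rw [Real.sqrt_sq (Complex.abs.nonneg c)]



/-- Cauchy-Schwarz for a positive-semidefinite Hermitian sesquilinear form, valid on a
subset closed under the needed combinations. -/
lemma sesq_cs (φ : H → H → ℂ) (p : Set H)
    (hp : ∀ (c : ℂ), ∀ u w, u ∈ p → w ∈ p → u + c • w ∈ p)
    (haddl : ∀ u w z, φ (u + w) z = φ u z + φ w z)
    (haddr : ∀ u w z, φ u (w + z) = φ u w + φ u z)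
    (hsmull : ∀ (c : ℂ) u w, φ (c • u) w = conj c * φ u w)
    (hsmulr : ∀ (c : ℂ) u w, φ u (c • w) = c * φ u w)
    (hherm : ∀ u w, conj (φ u w) = φ w u)
    (hpos : ∀ u ∈ p, 0 ≤ (φ u u).re)
    (u w : H) (hu : u ∈ p) (hw : w ∈ p) :
    Complex.abs (φ u w) ≤ Real.sqrt (φ u u).re * Real.sqrt (φ w w).re := by
  set r := Complex.abs (φ u w) with hr
  rcases eq_or_lt_of_le (Complex.abs.nonneg (φ u w)) with h0 | hpos_r
  · rw [hr, ← h0]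
    positivity
  · have hrpos : 0 < r := hpos_r
    have hrne : r ≠ 0 := ne_of_gt hrpos
    set a := (φ u u).re with ha
    set b := (φ w w).re with hb
    have ha0 : 0 ≤ a := hpos u hu
    have hb0 : 0 ≤ b := hpos w hw
    set θ : ℂ := conj (φ u w) / (r : ℂ) with hθ
    have hθabs : Complex.abs θ = 1 := by
      rw [hθ, map_div₀, Complex.abs_conj, Complex.abs_ofReal, ← hr,
        abs_of_pos hrpos, div_self hrne]
    have hq : ∀ t : ℝ, 0 ≤ a + 2 * t * r + t ^ 2 * b := by
      intro t
      have hmem := hp ((t : ℂ) * θ) u w hu hw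
      have hexp : φ (u + ((t : ℂ) * θ) • w) (u + ((t : ℂ) * θ) • w)
          = φ u u + ((t : ℂ) * θ) * φ u w + conj ((t : ℂ) * θ) * φ w u
            + (conj ((t : ℂ) * θ) * ((t : ℂ) * θ)) * φ w w := by
        simp only [haddl, haddr, hsmull, hsmulr]
        ring
      have hθφ : θ * φ u w = (r : ℂ) := by
        rw [hθ, div_mul_eq_mul_div, mul_comm, Complex.mul_conj, Complex.normSq_eq_abs, ← hr,
          Complex.ofReal_pow, sq, mul_div_assoc,
          div_self (Complex.ofReal_ne_zero.mpr hrne), mul_one]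
      have hθφ' : conj θ * φ w u = (r : ℂ) := by
        have h' : conj (θ * φ u w) = conj θ * φ w u := by
          rw [map_mul, hherm]
        rw [← h', hθφ, Complex.conj_ofReal]
      have habs2 : conj ((t : ℂ) * θ) * ((t : ℂ) * θ) = ((t ^ 2 : ℝ) : ℂ) := by
        rw [mul_comm, Complex.mul_conj, Complex.normSq_eq_abs, map_mul, Complex.abs_ofReal,
          hθabs, mul_one, Complex.ofReal_pow]
        norm_cast
        rw [sq_abs]
      have hre : (φ (u + ((t : ℂ) * θ) • w) (u + ((t : ℂ) * θ) • w)).re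
          = a + 2 * t * r + t ^ 2 * b := by
        have h1 : ((t : ℂ) * θ) * φ u w = ((t * r : ℝ) : ℂ) := by
          rw [mul_assoc, hθφ]; push_cast; ring
        have h2 : conj ((t : ℂ) * θ) * φ w u = ((t * r : ℝ) : ℂ) := by
          rw [map_mul, Complex.conj_ofReal, mul_assoc, hθφ']; push_cast; ring
        rw [hexp, h1, h2, habs2]
        simp only [Complex.add_re, Complex.re_ofReal_mul, Complex.ofReal_re]
        ring
      rw [← hre]
      exact hpos _ hmem
    rcases eq_or_lt_of_le hb0 with hb0' | hbpos
    · exfalso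
      have ht := hq (-(a + 1) / (2 * r))
      rw [← hb0', mul_zero, add_zero] at ht
      have h2 : 2 * (-(a + 1) / (2 * r)) * r = -(a + 1) := by field_simp
      linarith
    · have hbne : b ≠ 0 := ne_of_gt hbpos
      have ht := hq (-(r / b))
      have hsimp : a + 2 * -(r / b) * r + (-(r / b)) ^ 2 * b = a - r ^ 2 / b := by
        field_simp; ring
      rw [hsimp] at ht
      have hle : r ^ 2 / b ≤ a := by linarith
      have hkey : r ^ 2 ≤ a * b := by
        calc r ^ 2 = (r ^ 2 / b) * b := by field_simp
          _ ≤ a * b := mul_le_mul_of_nonneg_right hle (le_of_lt hbpos)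
      calc r = Real.sqrt (r ^ 2) := by rw [Real.sqrt_sq (le_of_lt hrpos)]
        _ ≤ Real.sqrt (a * b) := Real.sqrt_le_sqrt hkey
        _ = Real.sqrt a * Real.sqrt b := Real.sqrt_mul ha0 b

lemma abs_innerA_le (hA : A.IsPositive) (x y : H) :
    Complex.abs (innerA A x y) ≤ normA A x * normA A y := by
  have := sesq_cs (φ := innerA A) (p := Set.univ)
    (by intro c u w _ _; trivial)
    (innerA_add_left A) (innerA_add_right A) (innerA_smul_left A) (innerA_smul_right A)
    (innerA_conj A hA) (fun u _ => innerA_self_re_nonneg A hA u) x y trivial trivial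
  simpa [normA] using this

lemma innerA_re_add (hA : A.IsPositive) (u v : H) :
    (innerA A (u + v) (u + v)).re
      = (innerA A u u).re + 2 * (innerA A u v).re + (innerA A v v).re := by
  rw [innerA_add_left, innerA_add_right, innerA_add_right]
  have hconj : innerA A v u = conj (innerA A u v) := (innerA_conj A hA u v).symm
  simp only [Complex.add_re, hconj, Complex.conj_re]
  ring

lemma normA_add_le (hA : A.IsPositive) (x y : H) :
    normA A (x + y) ≤ normA A x + normA A y := by
  have hre := innerA_re_add A hA x y
  have hcs : (innerA A x y).re ≤ normA A x * normA A y := by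
    calc (innerA A x y).re ≤ Complex.abs (innerA A x y) := Complex.re_le_abs _
      _ ≤ normA A x * normA A y := abs_innerA_le A hA x y
  have h1 : (innerA A (x + y) (x + y)).re ≤ (normA A x + normA A y) ^ 2 := by
    rw [hre, ← normA_sq A hA x, ← normA_sq A hA y]; nlinarith
  calc normA A (x + y) = Real.sqrt (innerA A (x + y) (x + y)).re := rfl
    _ ≤ Real.sqrt ((normA A x + normA A y) ^ 2) := Real.sqrt_le_sqrt h1
    _ = normA A x + normA A y := Real.sqrt_sq (add_nonneg (normA_nonneg A x) (normA_nonneg A y))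

lemma normA_neg (hA : A.IsPositive) (x : H) : normA A (-x) = normA A x := by
  have : -x = ((-1 : ℂ)) • x := by simp
  rw [this, normA_smul A hA]; simp

lemma innerA_of_left_null (hA : A.IsPositive) {x : H} (hx : normA A x = 0) (y : H) :
    innerA A x y = 0 := by
  have := abs_innerA_le A hA x y
  rw [hx, zero_mul] at this
  exact Complex.abs.eq_zero.mp (le_antisymm this (Complex.abs.nonneg _))

lemma innerA_of_right_null (hA : A.IsPositive) {y : H} (hy : normA A y = 0) (x : H) :
    innerA A x y = 0 := by
  have h : innerA A y x = 0 := innerA_of_left_null A hA hy x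
  have h2 : conj (innerA A x y) = 0 := by rw [innerA_conj A hA x y]; exact h
  have h3 := congrArg conj h2
  simpa using h3

lemma normA_add_null (hA : A.IsPositive) (x : H) {n : H} (hn : normA A n = 0) :
    normA A (x + n) = normA A x := by
  apply le_antisymm
  · calc normA A (x + n) ≤ normA A x + normA A n := normA_add_le A hA x n
      _ = normA A x := by rw [hn, add_zero]
  · calc normA A x = normA A (x + n + -n) := by rw [add_assoc, add_neg_cancel, add_zero]
      _ ≤ normA A (x + n) + normA A (-n) := normA_add_le A hA _ _
      _ = normA A (x + n) := by rw [normA_neg A hA, hn, add_zero]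

lemma ABounded.null {R : H →L[ℂ] H} (hR : ABounded A R) {x : H} (hx : normA A x = 0) :
    normA A (R x) = 0 := by
  obtain ⟨c, _, hc⟩ := hR
  have := hc x
  rw [hx, mul_zero] at this
  exact le_antisymm this (normA_nonneg A _)

lemma ABounded.add_smul {R R' : H →L[ℂ] H} (hA : A.IsPositive) (hR : ABounded A R)
    (hR' : ABounded A R') (γ : ℂ) : ABounded A (R + γ • R') := by
  obtain ⟨c, hc0, hc⟩ := hR
  obtain ⟨c', hc'0, hc'⟩ := hR'
  refine ⟨c + Complex.abs γ * c' + 1, by nlinarith [mul_nonneg (Complex.abs.nonneg γ) hc'0.le], fun x => ?_⟩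
  have h1 : (R + γ • R') x = R x + γ • (R' x) := by
    simp [ContinuousLinearMap.add_apply, ContinuousLinearMap.smul_apply]
  rw [h1]
  calc normA A (R x + γ • R' x) ≤ normA A (R x) + normA A (γ • R' x) := normA_add_le A hA _ _
    _ = normA A (R x) + Complex.abs γ * normA A (R' x) := by rw [normA_smul A hA]
    _ ≤ c * normA A x + Complex.abs γ * (c' * normA A x) := by
        have := hc x
        have h2 := hc' x
        have h3 : Complex.abs γ * normA A (R' x) ≤ Complex.abs γ * (c' * normA A x) :=
          mul_le_mul_of_nonneg_left h2 (Complex.abs.nonneg γ)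
        linarith
    _ ≤ (c + Complex.abs γ * c' + 1) * normA A x := by
        have := normA_nonneg A x
        nlinarith

lemma opNormA_nonneg (R : H →L[ℂ] H) : 0 ≤ opNormA A R := by
  apply Real.sSup_nonneg
  rintro r ⟨x, hx, rfl⟩
  exact normA_nonneg A _

lemma opNormA_bddAbove {R : H →L[ℂ] H} (hR : ABounded A R) :
    BddAbove {r : ℝ | ∃ x : H, normA A x = 1 ∧ r = normA A (R x)} := by
  obtain ⟨c, _, hc⟩ := hR
  refine ⟨c, ?_⟩
  rintro r ⟨x, hx, rfl⟩
  have := hc x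
  rwa [hx, mul_one] at this

lemma opNormA_le {R : H →L[ℂ] H} {m : ℝ} (hm : 0 ≤ m)
    (h : ∀ x : H, normA A x = 1 → normA A (R x) ≤ m) : opNormA A R ≤ m := by
  apply Real.sSup_le _ hm
  rintro r ⟨x, hx, rfl⟩
  exact h x hx

lemma le_opNormA {R : H →L[ℂ] H} (hR : ABounded A R) (hA : A.IsPositive) (x : H) :
    normA A (R x) ≤ opNormA A R * normA A x := by
  by_cases h0 : normA A x = 0
  · rw [h0, mul_zero, ABounded.null A hR h0]
  · have hpos : 0 < normA A x := lt_of_le_of_ne (normA_nonneg A x) (Ne.symm h0)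
    set ν := normA A x with hν
    have hunit : normA A (((ν⁻¹ : ℝ) : ℂ) • x) = 1 := by
      rw [normA_smul A hA, Complex.abs_ofReal, abs_of_pos (by positivity), ← hν,
        inv_mul_cancel₀ (ne_of_gt hpos)]
    have hmem : normA A (R (((ν⁻¹ : ℝ) : ℂ) • x)) ∈
        {r : ℝ | ∃ y : H, normA A y = 1 ∧ r = normA A (R y)} := ⟨_, hunit, rfl⟩
    have hle : normA A (R (((ν⁻¹ : ℝ) : ℂ) • x)) ≤ opNormA A R :=
      le_csSup (opNormA_bddAbove A hR) hmem
    have heq : normA A (R (((ν⁻¹ : ℝ) : ℂ) • x)) = ν⁻¹ * normA A (R x) := by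
      rw [map_smul, normA_smul A hA, Complex.abs_ofReal, abs_of_pos (by positivity)]
    rw [heq] at hle
    calc normA A (R x) = ν * (ν⁻¹ * normA A (R x)) := by
          field_simp
      _ ≤ ν * opNormA A R := mul_le_mul_of_nonneg_left hle (le_of_lt hpos)
      _ = opNormA A R * ν := mul_comm _ _

lemma continuous_normA : Continuous (normA A) := by
  apply Real.continuous_sqrt.comp
  apply Complex.continuous_re.comp
  exact Continuous.inner (A.continuous) continuous_id

lemma continuous_innerA_diag : Continuous (fun v : H => innerA A v v) :=
  Continuous.inner (A.continuous) continuous_id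

/-- Toeplitz–Hausdorff type convexity for the restricted "numerical range" of a
sesquilinear form over the `A`-unit sphere of a subspace on which `A` is definite. -/
lemma th_convex (hA : A.IsPositive) (K' : Submodule ℂ H)
    (hdef : ∀ v ∈ K', normA A v = 0 → v = 0)
    (ψ : H → H → ℂ)
    (hψal : ∀ u w z : H, ψ (u + w) z = ψ u z + ψ w z)
    (hψar : ∀ u w z : H, ψ u (w + z) = ψ u w + ψ u z)
    (hψsl : ∀ (c : ℂ) (u w : H), ψ (c • u) w = conj c * ψ u w)
    (hψsr : ∀ (c : ℂ) (u w : H), ψ u (c • w) = c * ψ u w)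
    (hψc : Continuous fun v : H => ψ v v) :
    Convex ℝ {z : ℂ | ∃ v ∈ K', normA A v = 1 ∧ z = ψ v v} := by
  rintro za ⟨va, hvaK, hva1, rfl⟩ zb ⟨vb, hvbK, hvb1, rfl⟩ p q hp hq hpq
  have hIva : innerA A va va = 1 := by
    rw [innerA_self_eq A hA, hva1]; norm_num
  have hIvb : innerA A vb vb = 1 := by
    rw [innerA_self_eq A hA, hvb1]; norm_num
  by_cases hab : ψ va va = ψ vb vb
  · refine ⟨va, hvaK, hva1, ?_⟩
    rw [hab, Complex.real_smul, Complex.real_smul, ← add_mul]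
    norm_cast
    rw [hpq]
    simp
  · set β := Complex.abs (ψ vb vb - ψ va va) with hβ
    have hβpos : 0 < β := by
      rw [hβ]
      exact Complex.abs.pos (sub_ne_zero.mpr (Ne.symm hab))
    set θph : ℂ := conj (ψ vb vb - ψ va va) / (β : ℂ) with hθph
    have hθβ : θph * (ψ vb vb - ψ va va) = (β : ℂ) := by
      rw [hθph, div_mul_eq_mul_div, mul_comm, Complex.mul_conj, Complex.normSq_eq_abs, ← hβ,
        Complex.ofReal_pow, sq, mul_div_assoc,
        div_self (Complex.ofReal_ne_zero.mpr (ne_of_gt hβpos)), mul_one]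
    have hθne : θph ≠ 0 := by
      intro h
      rw [h, zero_mul] at hθβ
      exact (Complex.ofReal_ne_zero.mpr (ne_of_gt hβpos)) hθβ.symm
    set cf : H → H → ℂ := fun u w => θph * (ψ u w - (ψ va va) * innerA A u w) with hcf
    have hcfsl : ∀ (c : ℂ) (u w : H), cf (c • u) w = conj c * cf u w := by
      intro c u w; simp only [hcf, hψsl, innerA_smul_left]; ring
    have hcfsr : ∀ (c : ℂ) (u w : H), cf u (c • w) = c * cf u w := by
      intro c u w; simp only [hcf, hψsr, innerA_smul_right]; ring
    have hcaa : cf va va = 0 := by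
      simp only [hcf, hIva, mul_one]; ring
    have hcbb : cf vb vb = (β : ℂ) := by
      simp only [hcf, hIvb, mul_one]
      exact hθβ
    set P := cf va vb with hP
    set Q := cf vb va with hQ
    obtain ⟨ω, hω1, hωkey⟩ : ∃ ω : ℂ, Complex.abs ω = 1 ∧ (ω * P + conj ω * Q).im = 0 := by
      set u₁ := (P + Q).im with hu₁
      set u₂ := (P - Q).re with hu₂
      by_cases hz : u₁ = 0 ∧ u₂ = 0
      · refine ⟨1, by simp, ?_⟩
        simp only [one_mul, map_one]
        rw [Complex.add_im]
        have h1 : P.im + Q.im = u₁ := by rw [hu₁, Complex.add_im]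
        rw [h1, hz.1]
      · have hsum : 0 < u₁ ^ 2 + u₂ ^ 2 := by
          rcases not_and_or.mp hz with h | h
          · have h2 : 0 < u₁ ^ 2 := by positivity
            nlinarith [sq_nonneg u₂]
          · have h2 : 0 < u₂ ^ 2 := by positivity
            nlinarith [sq_nonneg u₁]
        set rr := Real.sqrt (u₁ ^ 2 + u₂ ^ 2) with hrr
        have hrrpos : 0 < rr := Real.sqrt_pos.mpr hsum
        refine ⟨⟨u₂ / rr, -u₁ / rr⟩, ?_, ?_⟩
        · rw [Complex.abs_apply, Complex.normSq_mk]
          rw [show u₂ / rr * (u₂ / rr) + -u₁ / rr * (-u₁ / rr) = (u₁ ^ 2 + u₂ ^ 2) / rr ^ 2 by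
            field_simp; ring]
          rw [hrr, Real.sq_sqrt (le_of_lt hsum), div_self (ne_of_gt hsum)]
          exact Real.sqrt_one
        · have hωre : ((⟨u₂ / rr, -u₁ / rr⟩ : ℂ)).re = u₂ / rr := rfl
          have hωim : ((⟨u₂ / rr, -u₁ / rr⟩ : ℂ)).im = -u₁ / rr := rfl
          simp only [Complex.add_im, Complex.mul_im, Complex.conj_re, Complex.conj_im,
            hωre, hωim]
          have h1 : P.im + Q.im = u₁ := by rw [hu₁, Complex.add_im]
          have h2 : P.re - Q.re = u₂ := by rw [hu₂, Complex.sub_re]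
          field_simp
          linear_combination u₂ * h1 - u₁ * h2
    set vs : ℝ → H := fun s => ((1 - s : ℝ) : ℂ) • va + (((s : ℝ) : ℂ) * ω) • vb with hvs
    have hvsK : ∀ s : ℝ, vs s ∈ K' := fun s =>
      K'.add_mem (K'.smul_mem _ hvaK) (K'.smul_mem _ hvbK)
    have hexp : ∀ (χ : H → H → ℂ),
        (∀ u w z : H, χ (u + w) z = χ u z + χ w z) →
        (∀ u w z : H, χ u (w + z) = χ u w + χ u z) →
        (∀ (c : ℂ) (u w : H), χ (c • u) w = conj c * χ u w) →
        (∀ (c : ℂ) (u w : H), χ u (c • w) = c * χ u w) →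
        ∀ s : ℝ, χ (vs s) (vs s)
          = (((1 - s) ^ 2 : ℝ) : ℂ) * χ va va + (((1 - s) * s : ℝ) : ℂ) * (ω * χ va vb)
            + (((s * (1 - s)) : ℝ) : ℂ) * (conj ω * χ vb va) + ((s ^ 2 : ℝ) : ℂ)
              * ((conj ω * ω) * χ vb vb) := by
      intro χ h1 h2 h3 h4 s
      simp only [hvs, h1, h2, h3, h4, map_mul, Complex.conj_ofReal]
      push_cast
      ring
    have hωω : conj ω * ω = 1 := by
      rw [mul_comm, Complex.mul_conj, Complex.normSq_eq_abs, hω1]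
      norm_num
    have hvs0 : vs 0 = va := by
      simp [hvs]
    have hvs1 : vs 1 = ω • vb := by
      simp [hvs]
    have hvsc : Continuous vs := by
      apply Continuous.add
      · exact (Complex.continuous_ofReal.comp (continuous_const.sub continuous_id)).smul
          continuous_const
      · exact ((Complex.continuous_ofReal.mul continuous_const).smul continuous_const)
    set nf : ℝ → ℝ := fun s => (innerA A (vs s) (vs s)).re with hnf
    have hnfc : Continuous nf :=
      Complex.continuous_re.comp ((continuous_innerA_diag A).comp hvsc)
    have hnormvs : ∀ s : ℝ, normA A (vs s) = Real.sqrt (nf s) := fun s => rfl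
    have hnpos : ∀ s ∈ Set.Icc (0 : ℝ) 1, 0 < nf s := by
      intro s hs
      rcases eq_or_lt_of_le (innerA_self_re_nonneg A hA (vs s)) with he | h
      · exfalso
        have hnull : normA A (vs s) = 0 := by
          have he' : nf s = 0 := he.symm
          rw [hnormvs, he', Real.sqrt_zero]
        have hzero : vs s = 0 := hdef _ (hvsK s) hnull
        rcases eq_or_lt_of_le hs.1 with hs0 | hs0p
        · rw [← hs0, hvs0] at hzero
          rw [hzero, normA_zero] at hva1
          exact zero_ne_one hva1
        rcases eq_or_lt_of_le hs.2 with hs1 | hs1p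
        · rw [hs1, hvs1] at hzero
          have hωne : ω ≠ 0 := by
            intro h; rw [h] at hω1; simp at hω1
          rcases smul_eq_zero.mp hzero with h | h
          · exact hωne h
          · rw [h, normA_zero] at hvb1
            exact zero_ne_one hvb1
        · -- 0 < s < 1 : va parallel vb
          have h1s : (((1 - s : ℝ)) : ℂ) ≠ 0 := by
            rw [Complex.ofReal_ne_zero]
            linarith
          set μ : ℂ := -((((1 - s : ℝ)) : ℂ)⁻¹ * (((s : ℝ) : ℂ) * ω)) with hμ
          have hva_eq : va = μ • vb := by
            have h1 : ((1 - s : ℝ) : ℂ) • va = -((((s : ℝ) : ℂ) * ω) • vb) :=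
              eq_neg_of_add_eq_zero_left hzero
            calc va = ((((1 - s : ℝ)) : ℂ)⁻¹ * (((1 - s : ℝ)) : ℂ)) • va := by
                  rw [inv_mul_cancel₀ h1s, one_smul]
              _ = (((1 - s : ℝ)) : ℂ)⁻¹ • (((1 - s : ℝ) : ℂ) • va) := by rw [← smul_smul]
              _ = (((1 - s : ℝ)) : ℂ)⁻¹ • (-((((s : ℝ) : ℂ) * ω) • vb)) := by rw [h1]
              _ = μ • vb := by rw [hμ, smul_neg, smul_smul, neg_smul]
          have hμ1 : conj μ * μ = 1 := by
            have h2 := hIva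
            rw [hva_eq, innerA_smul_left, innerA_smul_right, hIvb, mul_one] at h2
            exact h2
          apply hab
          rw [hva_eq, hψsl, hψsr, ← mul_assoc, hμ1, one_mul]
      · exact h
    have hnf0 : nf 0 = 1 := by
      simp only [hnf, hvs0, hIva, Complex.one_re]
    have hnf1 : nf 1 = 1 := by
      have : innerA A (vs 1) (vs 1) = 1 := by
        rw [hvs1, innerA_smul_left, innerA_smul_right, hIvb, mul_one, hωω]
      simp only [hnf, this, Complex.one_re]
    -- the path is real for cf
    have hdiagim : ∀ s : ℝ, (cf (vs s) (vs s)).im = 0 := by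
      intro s
      have hcfal : ∀ u w z : H, cf (u + w) z = cf u z + cf w z := by
        intro u w z; simp only [hcf, hψal, innerA_add_left]; ring
      have hcfar : ∀ u w z : H, cf u (w + z) = cf u w + cf u z := by
        intro u w z; simp only [hcf, hψar, innerA_add_right]; ring
      rw [hexp cf hcfal hcfar hcfsl hcfsr s, hcaa, hcbb, hωω, one_mul, mul_zero, zero_add]
      simp only [Complex.add_im, Complex.im_ofReal_mul]
      have hPQ : (ω * P).im + (conj ω * Q).im = 0 := by
        simpa [Complex.add_im] using hωkey
      have hβim : ((β : ℝ) : ℂ).im = 0 := Complex.ofReal_im β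
      rw [hβim]
      linear_combination (s * (1 - s)) * hPQ
    set φfun : ℝ → ℝ := fun s => (cf (vs s) (vs s)).re / nf s with hφfun
    have hcfdiagc : Continuous fun v : H => cf v v := by
      apply continuous_const.mul
      exact hψc.sub (continuous_const.mul (continuous_innerA_diag A))
    have hφcont : ContinuousOn φfun (Set.Icc (0 : ℝ) 1) := by
      apply ContinuousOn.div
      · exact (Complex.continuous_re.comp (hcfdiagc.comp hvsc)).continuousOn
      · exact hnfc.continuousOn
      · exact fun s hs => ne_of_gt (hnpos s hs)
    have hφ0 : φfun 0 = 0 := by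
      simp only [hφfun, hvs0, hcaa, Complex.zero_re, zero_div]
    have hφ1 : φfun 1 = β := by
      have h1 : cf (vs 1) (vs 1) = (β : ℂ) := by
        rw [hvs1, hcfsl, hcfsr, hcbb, ← mul_assoc, hωω, one_mul]
      simp only [hφfun, h1, hnf1, Complex.ofReal_re, div_one]
    have hq1 : q ≤ 1 := by linarith
    have hmem : q * β ∈ Set.Icc (φfun 0) (φfun 1) := by
      rw [hφ0, hφ1]
      constructor
      · positivity
      · nlinarith
    obtain ⟨s, hsI, hφs⟩ := intermediate_value_Icc (by norm_num : (0:ℝ) ≤ 1) hφcont hmem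
    have hnspos : 0 < nf s := hnpos s hsI
    have hsqpos : 0 < Real.sqrt (nf s) := Real.sqrt_pos.mpr hnspos
    set w : H := (((Real.sqrt (nf s))⁻¹ : ℝ) : ℂ) • vs s with hw
    have hwK : w ∈ K' := K'.smul_mem _ (hvsK s)
    have hw1 : normA A w = 1 := by
      rw [hw, normA_smul A hA, Complex.abs_ofReal, abs_of_pos (by positivity), hnormvs,
        inv_mul_cancel₀ (ne_of_gt hsqpos)]
    have hIww : innerA A w w = 1 := by
      rw [innerA_self_eq A hA, hw1]; norm_num
    have hcfww : cf w w = ((q * β : ℝ) : ℂ) := by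
      rw [hw, hcfsl, hcfsr, Complex.conj_ofReal, ← mul_assoc]
      have hcast : ((((Real.sqrt (nf s))⁻¹ : ℝ)) : ℂ) * ((((Real.sqrt (nf s))⁻¹ : ℝ)) : ℂ)
          = (((nf s)⁻¹ : ℝ) : ℂ) := by
        rw [← Complex.ofReal_mul, ← mul_inv, Real.mul_self_sqrt (le_of_lt hnspos)]
      have hreal : cf (vs s) (vs s) = (((cf (vs s) (vs s)).re : ℝ) : ℂ) := by
        apply Complex.ext
        · simp
        · simp [hdiagim s]
      have hre : (cf (vs s) (vs s)).re = q * β * nf s := by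
        have h7 := hφs
        rw [hφfun] at h7
        field_simp at h7
        linarith
      rw [hcast, hreal, hre, ← Complex.ofReal_mul]
      congr 1
      field_simp
    have hL : θph * (ψ w w - ψ va va) = ((q * β : ℝ) : ℂ) := by
      have h6 := hcfww
      simp only [hcf, hIww, mul_one] at h6
      exact h6
    have hR : θph * ((q : ℂ) * (ψ vb vb - ψ va va)) = ((q * β : ℝ) : ℂ) := by
      rw [show θph * ((q : ℂ) * (ψ vb vb - ψ va va))
          = (q : ℂ) * (θph * (ψ vb vb - ψ va va)) by ring, hθβ]
      norm_cast
    have hkey := mul_left_cancel₀ hθne (hL.trans hR.symm)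
    refine ⟨w, hwK, hw1, ?_⟩
    rw [Complex.real_smul, Complex.real_smul]
    have hp' : (p : ℂ) = 1 - (q : ℂ) := by
      have h8 : p = 1 - q := by linarith
      rw [h8]; push_cast; ring
    rw [hp']
    linear_combination -hkey

lemma innerA_sub_left (u w z : H) : innerA A (u - w) z = innerA A u z - innerA A w z := by
  have h : u - w = u + ((-1 : ℂ)) • w := by
    rw [neg_one_smul, ← sub_eq_add_neg]
  rw [h, innerA_add_left, innerA_smul_left, map_neg, map_one]
  ring

set_option maxHeartbeats 3000000 in
lemma core (hA : A.IsPositive) {T S : H →L[ℂ] H} (hT : ABounded A T) (hS : ABounded A S)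
    {M : ℝ} (hM0 : 0 ≤ M)
    (hRHS : ∀ x y : H, normA A x = 1 → normA A y = 1 → innerA A (S x) y = 0 →
      Complex.abs (innerA A (T x) y) ≤ M)
    (W : Submodule ℂ H) (hWfd : FiniteDimensional ℂ W)
    (x₀ : H) (hx₀W : x₀ ∈ W) (hx₀ : 0 < normA A (S x₀)) :
    ∃ γ : ℂ, ∀ x ∈ W, normA A ((T + γ • S) x) ≤ M * normA A x := by
  classical
  have hTS : ∀ γ : ℂ, ABounded A (T + γ • S) := fun γ => ABounded.add_smul A hA hT hS γ
  -- the null space of the seminorm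
  set Nul : Submodule ℂ H :=
    { carrier := {x : H | normA A x = 0}
      add_mem' := by
        intro a b ha hb
        simp only [Set.mem_setOf_eq] at *
        have h1 := normA_add_le A hA a b
        have h2 := normA_nonneg A (a + b)
        rw [ha, hb] at h1
        linarith
      zero_mem' := normA_zero A
      smul_mem' := by
        intro c x hx
        simp only [Set.mem_setOf_eq] at *
        rw [normA_smul A hA, hx, mul_zero] } with hNuldef
  have hNulmem : ∀ x : H, x ∈ Nul ↔ normA A x = 0 := fun x => Iff.rfl
  set N : Submodule ℂ H := W ⊓ Nul with hNdef
  haveI hNfd : FiniteDimensional ℂ N := Submodule.finiteDimensional_of_le inf_le_left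
  haveI : CompleteSpace N := FiniteDimensional.complete ℂ N
  set V : Submodule ℂ H := W ⊓ Nᗮ with hVdef
  haveI hVfd : FiniteDimensional ℂ V := Submodule.finiteDimensional_of_le inf_le_left
  haveI : ProperSpace V := FiniteDimensional.proper ℂ V
  have hdecomp : ∀ x ∈ W, ∃ v n : H, v ∈ V ∧ n ∈ N ∧ x = v + n := by
    intro x hx
    refine ⟨x - (N.orthogonalProjection x : H), (N.orthogonalProjection x : H),
      ?_, (N.orthogonalProjection x).2, by abel⟩
    refine Submodule.mem_inf.mpr ⟨?_, Submodule.sub_starProjection_mem_orthogonal (K := N) x⟩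
    exact W.sub_mem hx ((inf_le_left : N ≤ W) (N.orthogonalProjection x).2)
  have hVposdef : ∀ v, v ∈ V → normA A v = 0 → v = 0 := by
    intro v hv h0
    obtain ⟨hvW, hvO⟩ := Submodule.mem_inf.mp hv
    have hvN : v ∈ N := Submodule.mem_inf.mpr ⟨hvW, (hNulmem v).mpr h0⟩
    have h2 := (Submodule.mem_orthogonal N v).mp hvO v hvN
    exact inner_self_eq_zero.mp h2
  have hNnul : ∀ n : H, n ∈ N → normA A n = 0 := fun n hn =>
    (hNulmem n).mp ((inf_le_right : N ≤ Nul) hn)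
  have happly : ∀ (R : H →L[ℂ] H), ABounded A R → ∀ v n : H, normA A n = 0 →
      normA A (R (v + n)) = normA A (R v) := by
    intro R hR v n hn
    rw [map_add]
    exact normA_add_null A hA _ (ABounded.null A hR hn)
  -- decompose x₀
  obtain ⟨v₀, n₀, hv₀V, hn₀N, hx₀eq⟩ := hdecomp x₀ hx₀W
  have hn₀nul : normA A n₀ = 0 := hNnul n₀ hn₀N
  have hSv₀ : 0 < normA A (S v₀) := by
    have h := happly S hS v₀ n₀ hn₀nul
    rw [← hx₀eq] at h
    rw [h] at hx₀
    exact hx₀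
  have hv₀pos : 0 < normA A v₀ := by
    rcases eq_or_lt_of_le (normA_nonneg A v₀) with h | h
    · exfalso
      have := ABounded.null A hS h.symm
      rw [this] at hSv₀
      exact lt_irrefl 0 hSv₀
    · exact h
  set v₀' : V := ⟨v₀, hv₀V⟩ with hv₀'
  -- the A-unit sphere of V
  set Sph : Set V := {v : V | normA A (v : H) = 1} with hSphdef
  have hSphclosed : IsClosed Sph := by
    have h : Sph = (fun v : V => normA A (v : H)) ⁻¹' {1} := rfl
    rw [h]
    exact IsClosed.preimage ((continuous_normA A).comp continuous_subtype_val)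
      isClosed_singleton
  have hunitmem : ∀ (v : H) (hv : v ∈ V), 0 < normA A v →
      ((((normA A v)⁻¹ : ℝ) : ℂ) • (⟨v, hv⟩ : V)) ∈ Sph := by
    intro v hv hpos
    show normA A ((((normA A v)⁻¹ : ℝ) : ℂ) • v) = 1
    rw [normA_smul A hA, Complex.abs_ofReal, abs_of_pos (by positivity),
      inv_mul_cancel₀ (ne_of_gt hpos)]
  have hSphne : Sph.Nonempty := ⟨_, hunitmem v₀ hv₀V hv₀pos⟩
  -- compactness of the A-sphere
  have hSphcompact : IsCompact Sph := by
    obtain ⟨vm, hvm, hvmmin⟩ := (isCompact_sphere (0 : V) 1).exists_isMinOn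
      ⟨(‖v₀'‖⁻¹ : ℝ) • v₀', by
        have hv₀ne : v₀' ≠ 0 := by
          intro h
          have h2 : v₀ = 0 := congrArg Subtype.val h
          rw [h2, normA_zero] at hv₀pos
          exact lt_irrefl 0 hv₀pos
        have hv0Hne : v₀ ≠ 0 := fun h => hv₀ne (Subtype.ext h)
        simp [norm_smul, inv_mul_cancel₀ (norm_ne_zero_iff.mpr hv0Hne),
          inv_mul_cancel₀ (norm_ne_zero_iff.mpr (show (v₀' : H) ≠ 0 from hv0Hne))]⟩
      (((continuous_normA A).comp continuous_subtype_val).continuousOn)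
    set α := normA A (vm : H) with hα
    have hαpos : 0 < α := by
      rcases eq_or_lt_of_le (normA_nonneg A (vm : H)) with h | h
      · exfalso
        have h1 : (vm : H) = 0 := hVposdef _ vm.2 h.symm
        have h2 : vm = 0 := Subtype.ext h1
        rw [h2] at hvm
        simp at hvm
      · exact h
    have hcomp : ∀ v : V, α * ‖v‖ ≤ normA A (v : H) := by
      intro v
      rcases eq_or_ne v 0 with rfl | hne
      · simp [normA_zero]
      · have hnorm : ‖v‖ ≠ 0 := norm_ne_zero_iff.mpr hne
        set u : V := (((‖v‖⁻¹ : ℝ)) : ℂ) • v with hu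
        have hnorm' : ‖(v : H)‖ ≠ 0 := hnorm
        have humem : u ∈ Metric.sphere (0 : V) 1 := by
          simp only [hu, mem_sphere_iff_norm, sub_zero, norm_smul]
          rw [Complex.norm_real]
          simp [abs_of_pos (by positivity : (0:ℝ) < ‖v‖⁻¹), inv_mul_cancel₀ hnorm,
            inv_mul_cancel₀ hnorm']
        have h : α ≤ normA A (u : H) := hvmmin humem
        have hueq : normA A (u : H) = ‖v‖⁻¹ * normA A (v : H) := by
          show normA A ((((‖v‖⁻¹ : ℝ)) : ℂ) • (v : H)) = _
          rw [normA_smul A hA, Complex.abs_ofReal, abs_of_pos (by positivity)]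
        rw [hueq] at h
        have hvpos : 0 < ‖v‖ := lt_of_le_of_ne (norm_nonneg v) (Ne.symm hnorm)
        calc α * ‖v‖ ≤ (‖v‖⁻¹ * normA A (v : H)) * ‖v‖ :=
              mul_le_mul_of_nonneg_right h (le_of_lt hvpos)
          _ = normA A (v : H) := by
              rw [mul_comm (‖v‖⁻¹) _, mul_assoc, inv_mul_cancel₀ hnorm, mul_one]
    apply IsCompact.of_isClosed_subset (isCompact_closedBall (0 : V) α⁻¹) hSphclosed
    intro v hv
    have h1 := hcomp v
    rw [hv] at h1
    rw [Metric.mem_closedBall, dist_zero_right]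
    rw [← mul_le_mul_iff_of_pos_left hαpos]
    calc α * ‖v‖ ≤ 1 := h1
      _ = α * α⁻¹ := by rw [mul_inv_cancel₀ (ne_of_gt hαpos)]
  -- the function to minimize
  set Fg : ℂ → V → ℝ := fun γ v => normA A ((T + γ • S) (v : H)) with hFgdef
  have hFgc : ∀ γ, Continuous (Fg γ) := fun γ =>
    (continuous_normA A).comp (((T + γ • S).continuous).comp continuous_subtype_val)
  set F : ℂ → ℝ := fun γ => sSup (Fg γ '' Sph) with hFdef
  have hFmax : ∀ γ, ∃ v ∈ Sph, Fg γ v = F γ ∧ ∀ w ∈ Sph, Fg γ w ≤ F γ := by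
    intro γ
    obtain ⟨v, hv, hvmax⟩ := hSphcompact.exists_isMaxOn hSphne (hFgc γ).continuousOn
    have hbdd : BddAbove (Fg γ '' Sph) := hSphcompact.bddAbove_image (hFgc γ).continuousOn
    have hFeq : F γ = Fg γ v := le_antisymm
      (csSup_le (hSphne.image _) (by rintro r ⟨w, hw, rfl⟩; exact hvmax hw))
      (le_csSup hbdd ⟨v, hv, rfl⟩)
    exact ⟨v, hv, hFeq.symm, fun w hw => le_of_le_of_eq (hvmax hw) hFeq.symm⟩
  have hFle : ∀ γ, ∀ v ∈ Sph, Fg γ v ≤ F γ := fun γ v hv => (hFmax γ).choose_spec.2.2 v hv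
  have hF0 : ∀ γ, 0 ≤ F γ := by
    intro γ
    obtain ⟨v, hv, hveq, _⟩ := hFmax γ
    rw [← hveq]
    exact normA_nonneg A _
  -- coercivity
  have hcoer : ∀ γ : ℂ, Complex.abs γ * (normA A (S v₀)) - (normA A (T v₀)) ≤ (normA A v₀) * F γ := by
    intro γ
    have hmem := hunitmem v₀ hv₀V hv₀pos
    have h1 := hFle γ _ hmem
    have h2 : Fg γ (((((normA A v₀))⁻¹ : ℝ) : ℂ) • v₀') = (normA A v₀)⁻¹ * normA A ((T + γ • S) v₀) := by
      show normA A ((T + γ • S) (((((normA A v₀))⁻¹ : ℝ) : ℂ) • v₀)) = _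
      rw [map_smul, normA_smul A hA, Complex.abs_ofReal, abs_of_pos (by positivity)]
    rw [h2] at h1
    have h3 : Complex.abs γ * (normA A (S v₀)) - (normA A (T v₀)) ≤ normA A ((T + γ • S) v₀) := by
      have h4 : normA A (γ • S v₀) ≤ normA A ((T + γ • S) v₀) + (normA A (T v₀)) := by
        have h5 : γ • S v₀ = (T + γ • S) v₀ + -(T v₀) := by
          simp [ContinuousLinearMap.add_apply, ContinuousLinearMap.smul_apply]
        rw [h5]
        calc normA A ((T + γ • S) v₀ + -(T v₀))
            ≤ normA A ((T + γ • S) v₀) + normA A (-(T v₀)) := normA_add_le A hA _ _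
          _ = normA A ((T + γ • S) v₀) + (normA A (T v₀)) := by rw [normA_neg A hA]
      rw [normA_smul A hA] at h4
      linarith
    calc Complex.abs γ * (normA A (S v₀)) - (normA A (T v₀)) ≤ normA A ((T + γ • S) v₀) := h3
      _ = (normA A v₀) * ((normA A v₀)⁻¹ * normA A ((T + γ • S) v₀)) := by field_simp
      _ ≤ (normA A v₀) * F γ := mul_le_mul_of_nonneg_left h1 (le_of_lt hv₀pos)
  -- Lipschitz continuity of F
  obtain ⟨vS, hvS, hvSmax⟩ := hSphcompact.exists_isMaxOn hSphne
    (((continuous_normA A).comp (S.continuous.comp continuous_subtype_val)).continuousOn)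
  set mS := normA A (S (vS : H)) with hmS
  have hmSb : ∀ v ∈ Sph, normA A (S (v : H)) ≤ mS := fun v hv => hvSmax hv
  have hmS0 : 0 ≤ mS := normA_nonneg A _
  have hFlip : ∀ γ γ' : ℂ, F γ ≤ F γ' + Complex.abs (γ - γ') * mS := by
    intro γ γ'
    obtain ⟨v, hv, hveq, _⟩ := hFmax γ
    rw [← hveq]
    have h1 : (T + γ • S) (v : H) = (T + γ' • S) (v : H) + ((γ - γ') • (S (v : H))) := by
      simp only [ContinuousLinearMap.add_apply, ContinuousLinearMap.smul_apply, sub_smul]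
      abel
    have h2 : Fg γ v ≤ Fg γ' v + Complex.abs (γ - γ') * normA A (S (v : H)) := by
      show normA A ((T + γ • S) (v : H)) ≤ _
      rw [h1]
      calc normA A ((T + γ' • S) (v : H) + ((γ - γ') • (S (v : H))))
          ≤ normA A ((T + γ' • S) (v : H)) + normA A ((γ - γ') • (S (v : H))) :=
            normA_add_le A hA _ _
        _ = Fg γ' v + Complex.abs (γ - γ') * normA A (S (v : H)) := by
            rw [normA_smul A hA]
    have h3 := hFle γ' v hv
    have h4 := hmSb v hv
    have h5 : Complex.abs (γ - γ') * normA A (S (v : H)) ≤ Complex.abs (γ - γ') * mS :=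
      mul_le_mul_of_nonneg_left h4 (Complex.abs.nonneg _)
    linarith
  have hFcont : Continuous F := by
    have hlip : LipschitzWith (Real.toNNReal mS) F := by
      apply LipschitzWith.of_dist_le_mul
      intro γ γ'
      rw [Real.dist_eq, Complex.dist_eq, Real.coe_toNNReal mS hmS0]
      rw [abs_sub_le_iff]
      constructor
      · have := hFlip γ γ'
        show F γ - F γ' ≤ mS * Complex.abs (γ - γ')
        linarith [this]
      · have := hFlip γ' γ
        rw [← Complex.abs.map_neg (γ' - γ)] at this
        simp only [neg_sub] at this
        show F γ' - F γ ≤ mS * Complex.abs (γ - γ')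
        linarith [this]
    exact hlip.continuous
  -- the global minimizer
  set R₀ : ℝ := ((normA A v₀) * F 0 + (normA A (T v₀)) + 1) / (normA A (S v₀)) with hR₀
  have hR₀0 : 0 ≤ R₀ := by
    apply div_nonneg _ (le_of_lt hSv₀)
    have := hF0 0
    have := normA_nonneg A (T v₀)
    positivity
  obtain ⟨γh, hγhmem, hγhmin⟩ := (isCompact_closedBall (0 : ℂ) R₀).exists_isMinOn
    ⟨0, by simp [hR₀0]⟩ hFcont.continuousOn
  have hglobal : ∀ γ : ℂ, F γh ≤ F γ := by
    intro γ
    by_cases hγ : γ ∈ Metric.closedBall (0 : ℂ) R₀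
    · exact hγhmin hγ
    · have habs : R₀ < Complex.abs γ := by
        rw [Metric.mem_closedBall, dist_zero_right] at hγ
        push_neg at hγ
        exact hγ
      have h1 := hcoer γ
      have h2 : R₀ * (normA A (S v₀)) = (normA A v₀) * F 0 + (normA A (T v₀)) + 1 := by
        rw [hR₀, div_mul_cancel₀ _ (ne_of_gt hSv₀)]
      have h3 : R₀ * (normA A (S v₀)) < Complex.abs γ * (normA A (S v₀)) := by
        exact mul_lt_mul_of_pos_right habs hSv₀
      have h4 : (normA A v₀) * F 0 + 1 < (normA A v₀) * F γ := by linarith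
      have h5 : F γ ≥ F 0 := by nlinarith
      calc F γh ≤ F 0 := hγhmin (by simp [hR₀0])
        _ ≤ F γ := h5
  set d := F γh with hd
  set T' := T + γh • S with hT'
  by_cases hdM : d ≤ M
  · -- easy: the minimizer works
    refine ⟨γh, fun x hx => ?_⟩
    obtain ⟨v, n, hvV, hnN, rfl⟩ := hdecomp x hx
    have hnnul : normA A n = 0 := hNnul n hnN
    rw [happly (T + γh • S) (hTS γh) v n hnnul, normA_add_null A hA v hnnul]
    rcases eq_or_lt_of_le (normA_nonneg A v) with h0 | hpos
    · have hv0 : v = 0 := hVposdef v hvV h0.symm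
      rw [hv0]
      simp [normA_zero]
    · have hmem := hunitmem v hvV hpos
      have h1 := hFle γh _ hmem
      have h2 : Fg γh ((((normA A v)⁻¹ : ℝ) : ℂ) • (⟨v, hvV⟩ : V))
          = (normA A v)⁻¹ * normA A ((T + γh • S) v) := by
        show normA A ((T + γh • S) ((((normA A v)⁻¹ : ℝ) : ℂ) • v)) = _
        rw [map_smul, normA_smul A hA, Complex.abs_ofReal, abs_of_pos (by positivity)]
      rw [h2] at h1
      have h3 : (normA A v)⁻¹ * normA A ((T + γh • S) v) ≤ M := le_trans h1 hdM
      calc normA A ((T + γh • S) v)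
          = normA A v * ((normA A v)⁻¹ * normA A ((T + γh • S) v)) := by field_simp
        _ ≤ normA A v * M := mul_le_mul_of_nonneg_left h3 (le_of_lt hpos)
        _ = M * normA A v := mul_comm _ _
  · -- hard case : produce an exact pair, contradiction
    exfalso
    push_neg at hdM
    have hd0 : 0 < d := lt_of_le_of_lt hM0 hdM
    -- T' is bounded by d on V
    have hT'le : ∀ u : H, u ∈ V → normA A (T' u) ≤ d * normA A u := by
      intro u huV
      rcases eq_or_lt_of_le (normA_nonneg A u) with h0 | hpos
      · have hu0 : u = 0 := hVposdef u huV h0.symm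
        rw [hu0]
        simp [normA_zero]
      · have hmem := hunitmem u huV hpos
        have h1 := hFle γh _ hmem
        have h2 : Fg γh ((((normA A u)⁻¹ : ℝ) : ℂ) • (⟨u, huV⟩ : V))
            = (normA A u)⁻¹ * normA A (T' u) := by
          show normA A (T' ((((normA A u)⁻¹ : ℝ) : ℂ) • u)) = _
          rw [map_smul, normA_smul A hA, Complex.abs_ofReal, abs_of_pos (by positivity)]
        rw [h2] at h1
        calc normA A (T' u) = normA A u * ((normA A u)⁻¹ * normA A (T' u)) := by
              field_simp
          _ ≤ normA A u * d := mul_le_mul_of_nonneg_left h1 (le_of_lt hpos)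
          _ = d * normA A u := mul_comm _ _
    -- the PSD Hermitian form g
    set gf : H → H → ℂ := fun u w => ((d : ℝ) : ℂ) ^ 2 * innerA A u w
      - innerA A (T' u) (T' w) with hgfdef
    have hgfself : ∀ u : H, gf u u
        = (((d ^ 2 * (normA A u) ^ 2 - (normA A (T' u)) ^ 2 : ℝ)) : ℂ) := by
      intro u
      simp only [hgfdef]
      rw [innerA_self_eq A hA u, innerA_self_eq A hA (T' u)]
      push_cast
      ring
    have hgfposV : ∀ u ∈ (V : Set H), 0 ≤ (gf u u).re := by
      intro u hu
      rw [hgfself u, Complex.ofReal_re]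
      have h1 := hT'le u hu
      nlinarith [normA_nonneg A u, normA_nonneg A (T' u)]
    have hgfal : ∀ u w z : H, gf (u + w) z = gf u z + gf w z := by
      intro u w z; simp only [hgfdef, innerA_add_left, map_add]; ring
    have hgfar : ∀ u w z : H, gf u (w + z) = gf u w + gf u z := by
      intro u w z; simp only [hgfdef, innerA_add_right, map_add]; ring
    have hgfsl : ∀ (c : ℂ) (u w : H), gf (c • u) w = conj c * gf u w := by
      intro c u w; simp only [hgfdef, map_smul, innerA_smul_left]; ring
    have hgfsr : ∀ (c : ℂ) (u w : H), gf u (c • w) = c * gf u w := by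
      intro c u w; simp only [hgfdef, map_smul, innerA_smul_right]; ring
    have hgfherm : ∀ u w : H, conj (gf u w) = gf w u := by
      intro u w
      simp only [hgfdef, map_sub, map_mul, map_pow, Complex.conj_ofReal, innerA_conj A hA]
    have hgfCS := sesq_cs gf (V : Set H)
      (fun c u w hu hw => V.add_mem hu (V.smul_mem c hw)) hgfal hgfar hgfsl hgfsr hgfherm
      hgfposV
    -- the norming subspace K'
    set K' : Submodule ℂ H :=
      { carrier := {v : H | v ∈ V ∧ gf v v = 0}
        add_mem' := by
          rintro a b ⟨haV, ha0⟩ ⟨hbV, hb0⟩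
          refine ⟨V.add_mem haV hbV, ?_⟩
          have hab : gf a b = 0 := by
            have h1 := hgfCS a b haV hbV
            rw [ha0, hb0] at h1
            simp only [Complex.zero_re, Real.sqrt_zero, mul_zero] at h1
            exact Complex.abs.eq_zero.mp (le_antisymm h1 (Complex.abs.nonneg _))
          have hba : gf b a = 0 := by rw [← hgfherm, hab, map_zero]
          rw [hgfal, hgfar, hgfar, ha0, hab, hba, hb0]
          ring
        zero_mem' := by
          refine ⟨V.zero_mem, ?_⟩
          rw [hgfself]
          simp [map_zero, normA_zero]
        smul_mem' := by
          rintro c x ⟨hxV, hx0⟩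
          refine ⟨V.smul_mem c hxV, ?_⟩
          rw [hgfsl, hgfsr, hx0]
          ring } with hK'def
    have hK'le : K' ≤ V := fun v hv => hv.1
    haveI hK'fd : FiniteDimensional ℂ K' := Submodule.finiteDimensional_of_le hK'le
    set SphK : Set V := {v : V | v ∈ Sph ∧ (v : H) ∈ K'} with hSphKdef
    have hSphKcompact : IsCompact SphK := by
      have hint : SphK = Sph ∩ {v : V | (v : H) ∈ K'} := rfl
      rw [hint]
      exact hSphcompact.inter_right
        ((Submodule.closed_of_finiteDimensional K').preimage continuous_subtype_val)
    obtain ⟨vstar, hvstar, hvstareq, _⟩ := hFmax γh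
    have hvstarnorm : normA A (T' (vstar : H)) = d := hvstareq
    have hvstarK : (vstar : H) ∈ K' := by
      refine ⟨vstar.2, ?_⟩
      rw [hgfself]
      have h1 : normA A (vstar : H) = 1 := hvstar
      rw [h1, hvstarnorm]
      norm_num
    have hSphKne : SphK.Nonempty := ⟨vstar, hvstar, hvstarK⟩
    -- the constraint function
    set cfun : V → ℂ := fun v => innerA A (T' (v : H)) (S (v : H)) with hcfundef
    have hcfunc : Continuous cfun := by
      have hrw : cfun = fun v : V => @inner ℂ _ _ (A (T' (v : H))) (S (v : H)) := rfl
      rw [hrw]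
      exact Continuous.inner (A.continuous.comp (T'.continuous.comp continuous_subtype_val))
        (S.continuous.comp continuous_subtype_val)
    set gdre : V → ℝ := fun v => (gf (v : H) (v : H)).re with hgdredef
    have hgdrec : Continuous gdre := by
      have hrw : gdre = fun v : V => (((d : ℝ) : ℂ) ^ 2 * @inner ℂ _ _ (A (v : H)) ((v : H))
          - @inner ℂ _ _ (A (T' (v : H))) (T' (v : H))).re := rfl
      rw [hrw]
      apply Complex.continuous_re.comp
      apply Continuous.sub
      · exact continuous_const.mul
          (Continuous.inner (A.continuous.comp continuous_subtype_val) continuous_subtype_val)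
      · exact Continuous.inner
          (A.continuous.comp (T'.continuous.comp continuous_subtype_val))
          (T'.continuous.comp continuous_subtype_val)
    -- Danskin-type first order condition at the minimum
    have hDan : ∀ θ : ℂ, Complex.abs θ = 1 → ∃ v ∈ SphK, 0 ≤ (θ * cfun v).re := by
      intro θ hθ1
      by_contra hcon
      push_neg at hcon
      obtain ⟨vδ, hvδ, hvδmax⟩ := hSphKcompact.exists_isMaxOn hSphKne
        ((Complex.continuous_re.comp (continuous_const.mul hcfunc)).continuousOn)
      set δ := -((θ * cfun vδ).re) with hδdef
      have hδpos : 0 < δ := by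
        have := hcon vδ hvδ
        rw [hδdef]; linarith
      have hδb : ∀ v ∈ SphK, (θ * cfun v).re ≤ -δ := by
        intro v hv
        have h2 : (θ * cfun v).re ≤ (θ * cfun vδ).re := hvδmax hv
        rw [hδdef]
        linarith
      set B := {v : V | v ∈ Sph ∧ -δ/2 ≤ (θ * cfun v).re} with hBdef
      have hBcompact : IsCompact B := by
        have hBc : B = Sph ∩ ((fun v : V => (θ * cfun v).re) ⁻¹' Set.Ici (-δ/2)) := rfl
        rw [hBc]
        exact hSphcompact.inter_right (IsClosed.preimage
          (Complex.continuous_re.comp (continuous_const.mul hcfunc)) isClosed_Ici)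
      obtain ⟨ρ, hρpos, hρprop⟩ : ∃ ρ : ℝ, 0 < ρ ∧ ∀ v ∈ Sph, gdre v < ρ →
          (θ * cfun v).re < -δ/2 := by
        rcases Set.eq_empty_or_nonempty B with hBe | hBne
        · refine ⟨1, one_pos, fun v hv _ => ?_⟩
          by_contra hge
          push_neg at hge
          have hmem : v ∈ B := ⟨hv, hge⟩
          rw [hBe] at hmem
          exact hmem
        · obtain ⟨vB, hvB, hvBmin⟩ := hBcompact.exists_isMinOn hBne hgdrec.continuousOn
          refine ⟨gdre vB, ?_, ?_⟩
          · rcases eq_or_lt_of_le (hgfposV (vB : H) vB.2) with h0 | h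
            · exfalso
              have hvBK : (vB : H) ∈ K' := by
                refine ⟨vB.2, ?_⟩
                have h1 : (gf (vB : H) (vB : H)).re = 0 := h0.symm
                rw [hgfself] at h1 ⊢
                rw [Complex.ofReal_re] at h1
                rw [h1]
                norm_num
              have h3 := hδb vB ⟨hvB.1, hvBK⟩
              have h4 := hvB.2
              linarith
            · exact h
          · intro v hv hlt
            by_contra hge
            push_neg at hge
            have hvB' : v ∈ B := ⟨hv, hge⟩
            have h5 : gdre vB ≤ gdre v := hvBmin hvB'
            linarith
      obtain ⟨vΨ, hvΨ, hvΨmax⟩ := hSphcompact.exists_isMaxOn hSphne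
        ((Complex.continuous_abs.comp hcfunc).continuousOn)
      set Ψ := Complex.abs (cfun vΨ) with hΨdef
      have hΨb : ∀ v ∈ Sph, Complex.abs (cfun v) ≤ Ψ := fun v hv => hvΨmax hv
      have hΨ0 : 0 ≤ Ψ := Complex.abs.nonneg _
      set ms2 := mS ^ 2 with hms2def
      have hms20 : 0 ≤ ms2 := sq_nonneg mS
      have hms2b : ∀ v ∈ Sph, (normA A (S (v : H))) ^ 2 ≤ ms2 := by
        intro v hv
        have h1 := hmSb v hv
        have h0 := normA_nonneg A (S (v : H))
        nlinarith
      set t := min (δ / (2 * (ms2 + 1))) (min (ρ / (2 * Ψ + ms2 + 1)) 1) with htdef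
      have ht0 : 0 < t := by
        apply lt_min (by positivity)
        exact lt_min (by positivity) one_pos
      have ht1 : t ≤ 1 := le_trans (min_le_right _ _) (min_le_right _ _)
      have htδ : t ≤ δ / (2 * (ms2 + 1)) := min_le_left _ _
      have htρ : t ≤ ρ / (2 * Ψ + ms2 + 1) := le_trans (min_le_right _ _) (min_le_left _ _)
      set μ := ((t : ℝ) : ℂ) * θ with hμdef
      have hθθ : conj θ * θ = 1 := by
        rw [mul_comm, Complex.mul_conj, Complex.normSq_eq_abs, hθ1]
        norm_num
      have hμμ : conj μ * μ = ((t ^ 2 : ℝ) : ℂ) := by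
        rw [hμdef, map_mul, Complex.conj_ofReal]
        rw [show ((t : ℂ)) * conj θ * (((t : ℂ)) * θ) = ((t : ℂ) * (t : ℂ)) * (conj θ * θ)
          from by ring, hθθ]
        push_cast
        ring
      have hq : ∀ v : V, (normA A ((T' + μ • S) (v : H))) ^ 2
          = (normA A (T' (v : H))) ^ 2 + 2 * (t * (θ * cfun v).re)
            + t ^ 2 * (normA A (S (v : H))) ^ 2 := by
        intro v
        have happ : (T' + μ • S) (v : H) = T' (v : H) + μ • (S (v : H)) := by
          simp [ContinuousLinearMap.add_apply, ContinuousLinearMap.smul_apply]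
        rw [happ, normA_sq A hA]
        rw [innerA_add_left, innerA_add_right, innerA_add_right, innerA_smul_left,
          innerA_smul_left, innerA_smul_right, innerA_smul_right]
        have hYX : innerA A (S (v : H)) (T' (v : H)) = conj (cfun v) :=
          (innerA_conj A hA (T' (v : H)) (S (v : H))).symm
        rw [hYX]
        rw [innerA_self_eq A hA (T' (v : H)), innerA_self_eq A hA (S (v : H))]
        have hconjpair : conj μ * conj (cfun v) = conj (μ * cfun v) :=
          (map_mul (starRingEnd ℂ) μ (cfun v)).symm
        rw [hconjpair]
        rw [show conj μ * (μ * ((((normA A (S (v : H))) ^ 2 : ℝ)) : ℂ))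
            = (conj μ * μ) * ((((normA A (S (v : H))) ^ 2 : ℝ)) : ℂ) from by ring, hμμ]
        have hμc : μ * cfun v = ((t : ℝ) : ℂ) * (θ * cfun v) := by
          rw [hμdef]; ring
        rw [hμc, ← Complex.ofReal_mul]
        simp only [Complex.add_re, Complex.ofReal_re, Complex.conj_re,
          Complex.re_ofReal_mul]
        ring
      have hkey : ∀ v ∈ Sph, (normA A ((T' + μ • S) (v : H))) ^ 2 < d ^ 2 := by
        intro v hv
        have hS2 := hms2b v hv
        have hT'2 : (normA A (T' (v : H))) ^ 2 = d ^ 2 - gdre v := by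
          have h1 : gdre v = d ^ 2 * (normA A (v : H)) ^ 2 - (normA A (T' (v : H))) ^ 2 := by
            show (gf (v : H) (v : H)).re = _
            rw [hgfself, Complex.ofReal_re]
          have h2 : normA A (v : H) = 1 := hv
          rw [h2] at h1
          rw [h1]
          ring
        have hgnn : 0 ≤ gdre v := hgfposV (v : H) v.2
        rw [hq v, hT'2]
        by_cases hreg : gdre v < ρ
        · have h1 : (θ * cfun v).re < -δ/2 := hρprop v hv hreg
          have h2 : t * ms2 ≤ δ / 2 := by
            have h2a := htδ
            rw [le_div_iff₀ (by positivity : (0:ℝ) < 2 * (ms2 + 1))] at h2a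
            have hexp : t * (2 * (ms2 + 1)) = 2 * (t * ms2) + 2 * t := by ring
            rw [hexp] at h2a
            linarith
          have h3 : t ^ 2 * (normA A (S (v : H))) ^ 2 ≤ t * ms2 := by
            nlinarith [mul_nonneg (sub_nonneg.mpr ht1) (sq_nonneg (normA A (S (v : H)))),
              mul_nonneg (le_of_lt ht0)
                (sub_nonneg.mpr hS2), sq_nonneg (normA A (S (v : H)))]
          have h4 : t * (θ * cfun v).re ≤ t * (-δ/2) :=
            mul_le_mul_of_nonneg_left (le_of_lt h1) (le_of_lt ht0)
          nlinarith [mul_pos ht0 hδpos]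
        · push_neg at hreg
          have h1 : (θ * cfun v).re ≤ Ψ := by
            calc (θ * cfun v).re ≤ Complex.abs (θ * cfun v) := Complex.re_le_abs _
              _ = Complex.abs (cfun v) := by rw [map_mul, hθ1, one_mul]
              _ ≤ Ψ := hΨb v hv
          have h2 : t * (2 * Ψ + ms2 + 1) ≤ ρ := by
            have h2a := htρ
            rw [le_div_iff₀ (by positivity : (0:ℝ) < 2 * Ψ + ms2 + 1)] at h2a
            linarith
          have h3 : t ^ 2 * (normA A (S (v : H))) ^ 2 ≤ t * ms2 := by
            nlinarith [mul_nonneg (sub_nonneg.mpr ht1) (sq_nonneg (normA A (S (v : H)))),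
              mul_nonneg (le_of_lt ht0)
                (sub_nonneg.mpr hS2), sq_nonneg (normA A (S (v : H)))]
          have h4 : t * (θ * cfun v).re ≤ t * Ψ :=
            mul_le_mul_of_nonneg_left h1 (le_of_lt ht0)
          have h5 : t * (2 * Ψ + ms2 + 1) = 2 * (t * Ψ) + t * ms2 + t := by ring
          linarith
      -- contradiction with the global minimum
      obtain ⟨v1, hv1, hv1eq, _⟩ := hFmax (γh + μ)
      have hop : T + (γh + μ) • S = T' + μ • S := by
        rw [hT', add_smul]
        abel
      have hlt : F (γh + μ) < d := by
        rw [← hv1eq]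
        have h3 := hkey v1 hv1
        have h4 : Fg (γh + μ) v1 = normA A ((T' + μ • S) (v1 : H)) := by
          show normA A ((T + (γh + μ) • S) (v1 : H)) = _
          rw [hop]
        rw [h4]
        nlinarith [normA_nonneg A ((T' + μ • S) (v1 : H))]
      have hge := hglobal (γh + μ)
      linarith
    -- separation: 0 lies in the (convex, compact) constrained numerical range
    set Cset : Set ℂ := cfun '' SphK with hCsetdef
    have hCcomp : IsCompact Cset := hSphKcompact.image hcfunc
    have hCne : Cset.Nonempty := hSphKne.image _
    have hCeq : Cset = {z : ℂ | ∃ v ∈ K', normA A v = 1 ∧ z = innerA A (T' v) (S v)} := by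
      ext z
      constructor
      · rintro ⟨v, ⟨hvS, hvK⟩, rfl⟩
        exact ⟨(v : H), hvK, hvS, rfl⟩
      · rintro ⟨v, hvK, hv1, rfl⟩
        exact ⟨⟨v, hK'le hvK⟩, ⟨hv1, hvK⟩, rfl⟩
    have hCconv : Convex ℝ Cset := by
      rw [hCeq]
      apply th_convex A hA K' (fun v hv h0 => hVposdef v (hK'le hv) h0)
        (fun u w => innerA A (T' u) (S w))
      · intro u w z; rw [map_add, innerA_add_left]
      · intro u w z; rw [map_add, innerA_add_right]
      · intro c u w; rw [map_smul, innerA_smul_left]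
      · intro c u w; rw [map_smul, innerA_smul_right]
      · have hrw : (fun v : H => innerA A (T' v) (S v))
            = fun v : H => @inner ℂ _ _ (A (T' v)) (S v) := rfl
        rw [hrw]
        exact Continuous.inner (A.continuous.comp T'.continuous) S.continuous
    have h0C : (0 : ℂ) ∈ Cset := by
      by_contra h0
      obtain ⟨f, u, hfu, hu0⟩ := geometric_hahn_banach_closed_point hCconv hCcomp.isClosed h0
      rw [map_zero] at hu0
      set θ : ℂ := ((f 1 : ℝ) : ℂ) - ((f Complex.I : ℝ) : ℂ) * Complex.I with hθdef
      have hfre : ∀ z : ℂ, f z = (θ * z).re := by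
        intro z
        have hz : z = (z.re : ℝ) • (1 : ℂ) + (z.im : ℝ) • Complex.I := by
          rw [Complex.real_smul, Complex.real_smul, mul_one]
          exact (Complex.re_add_im z).symm
        calc f z = f ((z.re : ℝ) • (1 : ℂ) + (z.im : ℝ) • Complex.I) := by rw [← hz]
          _ = z.re * f 1 + z.im * f Complex.I := by
              rw [map_add, map_smul, map_smul, smul_eq_mul, smul_eq_mul]
          _ = (θ * z).re := by
              rw [hθdef]
              simp only [Complex.mul_re, Complex.sub_re, Complex.sub_im, Complex.mul_im,
                Complex.ofReal_re, Complex.ofReal_im, Complex.I_re, Complex.I_im]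
              ring
      have hθne : θ ≠ 0 := by
        intro hθ0
        obtain ⟨a, ha⟩ := hCne
        have h1 := hfu a ha
        rw [hfre a, hθ0, zero_mul] at h1
        simp only [Complex.zero_re] at h1
        linarith
      have hθabs : 0 < Complex.abs θ := Complex.abs.pos hθne
      set θu := θ / ((Complex.abs θ : ℝ) : ℂ) with hθudef
      have hθu1 : Complex.abs θu = 1 := by
        rw [hθudef, map_div₀, Complex.abs_ofReal, abs_of_pos hθabs,
          div_self (ne_of_gt hθabs)]
      obtain ⟨v, hvK, hre⟩ := hDan θu hθu1
      have h5 : (θ * cfun v).re = Complex.abs θ * (θu * cfun v).re := by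
        have h6 : θ = ((Complex.abs θ : ℝ) : ℂ) * θu := by
          rw [hθudef, mul_div_cancel₀]
          exact Complex.ofReal_ne_zero.mpr (ne_of_gt hθabs)
        rw [h6]
        rw [mul_assoc, Complex.re_ofReal_mul]
        rw [← h6]
      have h7 := hfu (cfun v) ⟨v, hvK, rfl⟩
      rw [hfre] at h7
      have h8 : 0 ≤ (θ * cfun v).re := by
        rw [h5]
        exact mul_nonneg (le_of_lt hθabs) hre
      linarith
    -- extract the exact pair and contradict M < d
    rw [hCeq] at h0C
    obtain ⟨v, hvK, hv1, hcv⟩ := h0C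
    have hcv' : innerA A (T' v) (S v) = 0 := hcv.symm
    have hgfv : gf v v = 0 := hvK.2
    have hT'vd : normA A (T' v) = d := by
      have h1 : (gf v v).re = 0 := by rw [hgfv]; rfl
      rw [hgfself, Complex.ofReal_re, hv1] at h1
      have h2 := normA_nonneg A (T' v)
      nlinarith
    set y : H := (((d⁻¹ : ℝ)) : ℂ) • (T' v) with hydef
    have hy1 : normA A y = 1 := by
      rw [hydef, normA_smul A hA, Complex.abs_ofReal, abs_of_pos (by positivity),
        hT'vd, inv_mul_cancel₀ (ne_of_gt hd0)]
    have hcons : innerA A (S v) y = 0 := by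
      rw [hydef, innerA_smul_right]
      have h1 : innerA A (S v) (T' v) = conj (innerA A (T' v) (S v)) :=
        (innerA_conj A hA (T' v) (S v)).symm
      rw [h1, hcv', map_zero, mul_zero]
    have hval : innerA A (T v) y = ((d : ℝ) : ℂ) := by
      have hTT' : T v = T' v - γh • S v := by
        have h1 : T' v = T v + γh • S v := by
          show (T + γh • S) v = _
          simp [ContinuousLinearMap.add_apply, ContinuousLinearMap.smul_apply]
        rw [h1]
        abel
      rw [hTT', innerA_sub_left, innerA_smul_left, hcons, mul_zero, sub_zero]
      rw [hydef, innerA_smul_right, innerA_self_eq A hA, hT'vd]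
      rw [← Complex.ofReal_mul]
      congr 1
      rw [sq]
      field_simp
    have hfinal := hRHS v y hv1 hy1 hcons
    rw [hval, Complex.abs_ofReal, abs_of_pos hd0] at hfinal
    linarith

set_option maxHeartbeats 1000000 in
theorem stmt14' [CompleteSpace H] (A T S : H →L[ℂ] H) (hA : A.IsPositive)
    (hT : ABounded A T) (hS : ABounded A S) :
    (⨅ γ : ℂ, opNormA A (T + γ • S)) =
    sSup {r : ℝ | ∃ x y : H, normA A x = 1 ∧ normA A y = 1 ∧
      innerA A (S x) y = 0 ∧ r = Complex.abs (innerA A (T x) y)} := by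
  classical
  set RHSset := {r : ℝ | ∃ x y : H, normA A x = 1 ∧ normA A y = 1 ∧
      innerA A (S x) y = 0 ∧ r = Complex.abs (innerA A (T x) y)} with hRHSdef
  have hRb : BddAbove RHSset := by
    obtain ⟨cT, hcT0, hcT⟩ := hT
    refine ⟨cT, ?_⟩
    rintro r ⟨x, y, hx, hy, hc, rfl⟩
    calc Complex.abs (innerA A (T x) y) ≤ normA A (T x) * normA A y := abs_innerA_le A hA _ _
      _ = normA A (T x) := by rw [hy, mul_one]
      _ ≤ cT * normA A x := hcT x
      _ = cT := by rw [hx, mul_one]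
  set M := sSup RHSset with hMdef
  have hM0 : 0 ≤ M := by
    apply Real.sSup_nonneg
    rintro r ⟨x, y, _, _, _, rfl⟩
    exact Complex.abs.nonneg _
  have hMub : ∀ r ∈ RHSset, r ≤ M := fun r hr => le_csSup hRb hr
  have hbddbelow : BddBelow (Set.range fun γ : ℂ => opNormA A (T + γ • S)) := by
    refine ⟨0, ?_⟩
    rintro r ⟨γ, rfl⟩
    exact opNormA_nonneg A _
  apply le_antisymm
  · -- hard direction : inf ≤ M
    by_cases hSnull : ∃ x₀ : H, 0 < normA A (S x₀)
    · obtain ⟨x₀, hx₀⟩ := hSnull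
      set Γ : H → Set ℂ := fun x => {γ : ℂ | normA A ((T + γ • S) x) ≤ M * normA A x}
        with hΓdef
      have hΓclosed : ∀ x, IsClosed (Γ x) := by
        intro x
        have heq1 : Γ x = (fun γ : ℂ => normA A ((T + γ • S) x)) ⁻¹'
            Set.Iic (M * normA A x) := rfl
        rw [heq1]
        apply IsClosed.preimage _ isClosed_Iic
        have hc2 : Continuous fun γ : ℂ => T x + γ • S x :=
          continuous_const.add (continuous_id.smul continuous_const)
        have heq : (fun γ : ℂ => normA A ((T + γ • S) x))
            = fun γ : ℂ => normA A (T x + γ • S x) := by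
          funext γ
          simp [ContinuousLinearMap.add_apply, ContinuousLinearMap.smul_apply]
        rw [heq]
        exact (continuous_normA A).comp hc2
      have hΓ0compact : IsCompact (Γ x₀) := by
        apply IsCompact.of_isClosed_subset
          (isCompact_closedBall (0 : ℂ) ((M * normA A x₀ + normA A (T x₀)) / normA A (S x₀)))
          (hΓclosed x₀)
        intro γ hγ
        have h1 : normA A ((T + γ • S) x₀) ≤ M * normA A x₀ := hγ
        have h2 : normA A (γ • S x₀) ≤ normA A ((T + γ • S) x₀) + normA A (T x₀) := by
          have h3 : γ • S x₀ = (T + γ • S) x₀ + -(T x₀) := by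
            simp [ContinuousLinearMap.add_apply, ContinuousLinearMap.smul_apply]
          rw [h3]
          calc normA A ((T + γ • S) x₀ + -(T x₀))
              ≤ normA A ((T + γ • S) x₀) + normA A (-(T x₀)) := normA_add_le A hA _ _
            _ = normA A ((T + γ • S) x₀) + normA A (T x₀) := by rw [normA_neg A hA]
        rw [normA_smul A hA] at h2
        rw [Metric.mem_closedBall, dist_zero_right, Complex.norm_eq_abs]
        rw [le_div_iff₀ hx₀]
        linarith
      have hFIP : ∀ u : Finset H, (Γ x₀ ∩ ⋂ x ∈ u, Γ x).Nonempty := by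
        intro u
        set W := Submodule.span ℂ (insert x₀ (↑u : Set H)) with hW
        haveI hWfd : FiniteDimensional ℂ W :=
          FiniteDimensional.span_of_finite ℂ ((u.finite_toSet).insert x₀)
        obtain ⟨γ, hγ⟩ := core A hA hT hS hM0
          (fun x y hx hy hc => hMub _ ⟨x, y, hx, hy, hc, rfl⟩) W hWfd x₀
          (Submodule.subset_span (Set.mem_insert x₀ _)) hx₀
        refine ⟨γ, hγ x₀ (Submodule.subset_span (Set.mem_insert _ _)), ?_⟩
        exact Set.mem_iInter₂.mpr fun x hx =>
          hγ x (Submodule.subset_span (Set.mem_insert_of_mem _ hx))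
      obtain ⟨γstar, hγstar⟩ := hΓ0compact.inter_iInter_nonempty Γ hΓclosed hFIP
      have hall : ∀ x : H, normA A ((T + γstar • S) x) ≤ M * normA A x := by
        intro x
        exact Set.mem_iInter.mp hγstar.2 x
      calc (⨅ γ : ℂ, opNormA A (T + γ • S)) ≤ opNormA A (T + γstar • S) :=
            ciInf_le hbddbelow γstar
        _ ≤ M := by
            apply opNormA_le A hM0
            intro x hx
            have h1 := hall x
            rw [hx, mul_one] at h1
            exact h1
    · -- S is A-null everywhere
      push_neg at hSnull
      have hSnull' : ∀ x, normA A (S x) = 0 := fun x =>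
        le_antisymm (hSnull x) (normA_nonneg A _)
      have h0 : (⨅ γ : ℂ, opNormA A (T + γ • S)) ≤ opNormA A (T + (0 : ℂ) • S) :=
        ciInf_le hbddbelow 0
      have hTeq : T + (0 : ℂ) • S = T := by rw [zero_smul, add_zero]
      rw [hTeq] at h0
      refine le_trans h0 ?_
      apply opNormA_le A hM0
      intro x hx
      rcases eq_or_lt_of_le (normA_nonneg A (T x)) with h1 | h1
      · rw [← h1]
        exact hM0
      · set r := normA A (T x) with hr
        set y : H := (((r⁻¹ : ℝ)) : ℂ) • T x with hy
        have hy1 : normA A y = 1 := by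
          rw [hy, normA_smul A hA, Complex.abs_ofReal, abs_of_pos (by positivity), ← hr,
            inv_mul_cancel₀ (ne_of_gt h1)]
        have hcons : innerA A (S x) y = 0 := innerA_of_left_null A hA (hSnull' x) y
        have hval : Complex.abs (innerA A (T x) y) = r := by
          rw [hy, innerA_smul_right, innerA_self_eq A hA, ← hr, map_mul, Complex.abs_ofReal,
            Complex.abs_ofReal, abs_of_pos (by positivity), abs_of_pos (by positivity)]
          rw [sq]
          field_simp
        exact hMub r ⟨x, y, hx, hy1, hcons, hval.symm⟩
  · -- easy direction : M ≤ inf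
    apply le_ciInf
    intro γ
    apply Real.sSup_le
    · rintro r ⟨x, y, hx, hy, hc, rfl⟩
      have h1 : innerA A (T x) y = innerA A ((T + γ • S) x) y := by
        have h2 : (T + γ • S) x = T x + γ • S x := by
          simp [ContinuousLinearMap.add_apply, ContinuousLinearMap.smul_apply]
        rw [h2, innerA_add_left, innerA_smul_left, hc, mul_zero, add_zero]
      rw [h1]
      calc Complex.abs (innerA A ((T + γ • S) x) y)
          ≤ normA A ((T + γ • S) x) * normA A y := abs_innerA_le A hA _ _
        _ = normA A ((T + γ • S) x) := by rw [hy, mul_one]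
        _ ≤ opNormA A (T + γ • S) * normA A x :=
            le_opNormA A (ABounded.add_smul A hA hT hS γ) hA x
        _ = opNormA A (T + γ • S) := by rw [hx, mul_one]
    · exact opNormA_nonneg A _
end Stmt14

theorem stmt14 [CompleteSpace H] (A T S : H →L[ℂ] H) (hA : A.IsPositive)
    (hT : ABounded A T) (hS : ABounded A S) :
    (⨅ γ : ℂ, opNormA A (T + γ • S)) =
    sSup {r : ℝ | ∃ x y : H, normA A x = 1 ∧ normA A y = 1 ∧
      innerA A (S x) y = 0 ∧ r = ‖innerA A (T x) y‖} := by
  exact Stmt14.stmt14' A T S hA hT hS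
end
end
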